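/- arXiv:math/0101242 — 6 statements merged into one kernel-verified Lean document; each statement's English description precedes it below -/
import Mathlib

section
/- Let p be a prime and m a positive integer with gcd(m, p) = 1. Suppose f : ZMod p → ℂ satisfies f(0) = 0, f(1) = 1, f(x)^m = 1 for all x ≠ 0, and ∑_{x ∈ ZMod p} f(x)·conj(f(x+h)) = -1 for every h ≠ 0. Then f is completely multiplicative: f(x·y) = f(x)·f(y) for all x, y ∈ ZMod p. -/
set_option maxHeartbeats 1000000

open Finset Polynomial

namespace CohnAux

section Core
variable {p : ℕ} [hp : Fact p.Prime] {k : Type*} [Field k] [CharP k p]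

local notation "ι" => (ZMod.castHom (dvd_refl p) k)

lemma castN : ((p - 1 : ℕ) : k) = -1 := by
  have h1 : 1 ≤ p := hp.out.one_lt.le
  push_cast [Nat.cast_sub h1]
  simp [CharP.cast_eq_zero k p]

lemma pow_N_eq_one {x : ZMod p} (hx : x ≠ 0) : (ι x) ^ (p - 1) = 1 := by
  rw [← map_pow, ZMod.pow_card_sub_one_eq_one hx, map_one]

lemma geom_sum_iota {w : ZMod p} (hw : w ≠ 0) :
    ∑ j ∈ range (p - 1), (ι w) ^ j = if w = 1 then -1 else 0 := by
  split_ifs with h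
  · subst h; simp [castN]
  · have h2 : (ι w) ≠ 1 := fun hc => h ((ZMod.castHom (dvd_refl p) k).injective
      (by simp only [map_one]; exact hc))
    have h3 := geom_sum_mul (ι w) (p - 1)
    rw [pow_N_eq_one hw, sub_self] at h3
    rcases mul_eq_zero.mp h3 with h4 | h4
    · exact h4
    · exact absurd (sub_eq_zero.mp h4) h2

lemma charSum (e : ℕ) :
    ∑ x : ZMod p, (if x = 0 then (0:k) else (ι x) ^ e) = if (p-1) ∣ e then -1 else 0 := by
  split_ifs with h
  · obtain ⟨c, rfl⟩ := h
    have h1 : ∀ x : ZMod p, (if x = 0 then (0:k) else (ι x) ^ ((p-1)*c)) =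
        (if x = 0 then (0:k) else 1) := by
      intro x
      split_ifs with hx
      · rfl
      · rw [pow_mul, pow_N_eq_one hx, one_pow]
    rw [Finset.sum_congr rfl (fun x _ => h1 x)]
    rw [Finset.sum_ite, Finset.sum_const, Finset.sum_const]
    simp only [smul_zero, smul_eq_mul, mul_one, zero_add]
    rw [Finset.filter_ne', Finset.card_erase_of_mem (Finset.mem_univ 0)]
    simp [ZMod.card p, castN]
  · obtain ⟨γ, hγ⟩ := IsCyclic.exists_generator (α := (ZMod p)ˣ)
    have hord : orderOf γ = p - 1 := by
      rw [orderOf_eq_card_of_forall_mem_zpowers hγ, Nat.card_eq_fintype_card,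
        ZMod.card_units p]
    have hγ0 : (↑γ : ZMod p) ≠ 0 := Units.ne_zero γ
    have hne : (ι ↑γ) ^ e ≠ 1 := by
      intro hc
      apply h
      rw [← hord, orderOf_dvd_iff_pow_eq_one]
      apply Units.ext
      apply (ZMod.castHom (dvd_refl p) k).injective
      push_cast
      simpa [map_pow] using hc
    set S : k := ∑ x : ZMod p, (if x = 0 then (0:k) else (ι x) ^ e) with hS
    have key : (ι ↑γ) ^ e * S = S := by
      rw [hS, Finset.mul_sum]
      apply Fintype.sum_equiv (Equiv.mulLeft₀ (↑γ : ZMod p) hγ0)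
      intro x
      simp only [Equiv.coe_fn_mk, Equiv.mulLeft₀_apply]
      rcases eq_or_ne x 0 with rfl | hx
      · simp
      · have hne' : (↑γ : ZMod p) * x ≠ 0 := mul_ne_zero hγ0 hx
        rw [if_neg hx, if_neg hne', map_mul, mul_pow]
    have h5 : ((ι ↑γ) ^ e - 1) * S = 0 := by ring_nf; rw [mul_comm] at key; linear_combination key
    rcases mul_eq_zero.mp h5 with h3 | h3
    · exact absurd (by linear_combination h3) hne
    · exact h3

lemma charSum' (n : ℕ) :
    ∑ x : ZMod p, (ι x) ^ n = if ((p-1) ∣ n ∧ n ≠ 0) then -1 else 0 := by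
  rcases eq_or_ne n 0 with rfl | hn
  · simp [ZMod.card p, CharP.cast_eq_zero k p]
  · have h1 : ∀ x : ZMod p, (ι x) ^ n = if x = 0 then (0:k) else (ι x) ^ n := by
      intro x
      split_ifs with hx
      · subst hx; simp [zero_pow hn]
      · rfl
    rw [Finset.sum_congr rfl (fun x _ => h1 x), charSum]
    simp [hn]

lemma sum_ind : ∑ x : ZMod p, (if x = 0 then (0:k) else 1) = -1 := by
  rw [Finset.sum_ite, Finset.sum_const, Finset.sum_const]
  simp only [smul_zero, smul_eq_mul, mul_one, zero_add]
  rw [Finset.filter_ne', Finset.card_erase_of_mem (Finset.mem_univ 0)]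
  simp [ZMod.card p, castN]

/-- The "multiplicative Fourier coefficients" sums. -/
def Sfun (F : ZMod p → k) (i : ℕ) : k := ∑ x : ZMod p, F x * (ι x) ^ i

lemma inversion (F : ZMod p → k) (hF0 : F 0 = 0) {w : ZMod p} (hw : w ≠ 0) :
    F w = -∑ i ∈ range (p-1), Sfun F i * (ι w⁻¹) ^ i := by
  have key : ∑ i ∈ range (p-1), Sfun F i * (ι w⁻¹) ^ i
      = ∑ x : ZMod p, (if x = w then -(F x) else 0) := by
    unfold Sfun
    simp only [Finset.sum_mul]
    rw [Finset.sum_comm]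
    apply Finset.sum_congr rfl
    intro x _
    rcases eq_or_ne x 0 with rfl | hx
    · simp [hF0, if_neg (Ne.symm hw)]
    · have h1 : ∀ i ∈ range (p-1), F x * (ι x) ^ i * (ι w⁻¹)^i
          = F x * (ι (x * w⁻¹))^i := by
        intro i _; rw [map_mul, mul_pow]; ring
      rw [Finset.sum_congr rfl h1, ← Finset.mul_sum,
        geom_sum_iota (mul_ne_zero hx (inv_ne_zero hw))]
      simp [mul_inv_eq_one₀ hw, mul_ite]
  rw [key]
  simp

lemma Sfun_period (F : ZMod p → k) (hF0 : F 0 = 0) (j : ℕ) :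
    Sfun F (j + (p-1)) = Sfun F j := by
  unfold Sfun
  apply Finset.sum_congr rfl
  intro x _
  rcases eq_or_ne x 0 with rfl | hx
  · simp [hF0]
  · rw [pow_add, pow_N_eq_one hx, mul_one]

lemma Sfun_mod (F : ZMod p → k) (hF0 : F 0 = 0) (i : ℕ) :
    Sfun F i = Sfun F (i % (p-1)) := by
  have aux : ∀ c j, Sfun F (j + (p-1) * c) = Sfun F j := by
    intro c
    induction c with
    | zero => simp
    | succ n ih =>
      intro j
      have h1 : j + (p-1) * (n+1) = (j + (p-1) * n) + (p-1) := by ring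
      rw [h1, Sfun_period F hF0, ih]
  conv_lhs => rw [← Nat.mod_add_div i (p-1)]
  rw [aux]

lemma moment (F G : ZMod p → k)
    (hC : ∀ h : ZMod p, ∑ x : ZMod p, F x * G (x + h) = -1) (n : ℕ) :
    ∑ j ∈ range (n+1), (-1:k)^(n-j) * (n.choose j) * Sfun F (n-j) * Sfun G j
    = if ((p-1) ∣ n ∧ n ≠ 0) then 1 else 0 := by
  have key : ∑ x : ZMod p, ∑ y : ZMod p, F x * G y * (ι y - ι x)^n
      = ∑ j ∈ range (n+1), (-1:k)^(n-j) * (n.choose j) * Sfun F (n-j) * Sfun G j := by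
    have e1 : ∀ x y : ZMod p, F x * G y * (ι y - ι x)^n
        = ∑ j ∈ range (n+1),
            ((-1:k)^(n-j) * (n.choose j) * (F x * (ι x)^(n-j))) * (G y * (ι y)^j) := by
      intro x y
      rw [sub_pow, Finset.mul_sum]
      apply Finset.sum_congr rfl
      intro j hj
      have hsign : (-1:k)^(j+n) = (-1:k)^(n-j) := by
        have hjn : j ≤ n := Nat.lt_succ_iff.mp (Finset.mem_range.mp hj)
        have h2 : j + n = (n - j) + 2*j := by omega
        rw [h2, pow_add, pow_mul]; simp
      rw [hsign]
      ring
    calc ∑ x : ZMod p, ∑ y : ZMod p, F x * G y * (ι y - ι x)^n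
        = ∑ x : ZMod p, ∑ y : ZMod p, ∑ j ∈ range (n+1),
            ((-1:k)^(n-j) * (n.choose j) * (F x * (ι x)^(n-j))) * (G y * (ι y)^j) := by
          exact Finset.sum_congr rfl fun x _ => Finset.sum_congr rfl fun y _ => e1 x y
      _ = ∑ x : ZMod p, ∑ j ∈ range (n+1), ∑ y : ZMod p,
            ((-1:k)^(n-j) * (n.choose j) * (F x * (ι x)^(n-j))) * (G y * (ι y)^j) :=
          Finset.sum_congr rfl fun x _ => Finset.sum_comm
      _ = ∑ j ∈ range (n+1), ∑ x : ZMod p, ∑ y : ZMod p,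
            ((-1:k)^(n-j) * (n.choose j) * (F x * (ι x)^(n-j))) * (G y * (ι y)^j) :=
          Finset.sum_comm
      _ = ∑ j ∈ range (n+1), (-1:k)^(n-j) * (n.choose j) * Sfun F (n-j) * Sfun G j := by
          apply Finset.sum_congr rfl
          intro j _
          unfold Sfun
          rw [← Finset.sum_mul_sum, ← Finset.mul_sum]
  have key2 : ∑ x : ZMod p, ∑ y : ZMod p, F x * G y * (ι y - ι x)^n
      = ∑ h : ZMod p, (∑ x : ZMod p, F x * G (x + h)) * (ι h)^n := by
    have e2 : ∀ x : ZMod p, ∑ h : ZMod p, F x * G (x+h) * (ι h)^n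
        = ∑ y : ZMod p, F x * G y * (ι y - ι x)^n := by
      intro x
      apply Fintype.sum_equiv (Equiv.addLeft x)
      intro h
      have h1 : ι (x + h) - ι x = ι h := by rw [map_add]; ring
      simp only [Equiv.coe_addLeft]
      rw [h1]
    calc ∑ x : ZMod p, ∑ y : ZMod p, F x * G y * (ι y - ι x)^n
        = ∑ x : ZMod p, ∑ h : ZMod p, F x * G (x+h) * (ι h)^n :=
          Finset.sum_congr rfl fun x _ => (e2 x).symm
      _ = ∑ h : ZMod p, ∑ x : ZMod p, F x * G (x+h) * (ι h)^n := Finset.sum_comm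
      _ = ∑ h : ZMod p, (∑ x : ZMod p, F x * G (x + h)) * (ι h)^n := by
          exact Finset.sum_congr rfl fun h _ => (Finset.sum_mul _ _ _).symm
  rw [← key, key2, Finset.sum_congr rfl fun h _ => by rw [hC h]]
  simp only [neg_one_mul, Finset.sum_neg_distrib]
  rw [charSum']
  split_ifs <;> simp

lemma conv (F G : ZMod p → k) (hF0 : F 0 = 0) (hG0 : G 0 = 0)
    (hFG : ∀ x : ZMod p, x ≠ 0 → F x * G x = 1) (e : ℕ) :
    ∑ j ∈ range (p-1), Sfun F (e + (p-1) - j) * Sfun G j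
      = if (p-1) ∣ e then 1 else 0 := by
  have step1 : ∑ j ∈ range (p-1), Sfun F (e + (p-1) - j) * Sfun G j
      = ∑ x : ZMod p, ∑ y : ZMod p, ∑ j ∈ range (p-1),
          (F x * (ι x)^(e+(p-1)-j)) * (G y * (ι y)^j) := by
    calc ∑ j ∈ range (p-1), Sfun F (e + (p-1) - j) * Sfun G j
        = ∑ j ∈ range (p-1), ∑ x : ZMod p, ∑ y : ZMod p,
            (F x * (ι x)^(e+(p-1)-j)) * (G y * (ι y)^j) := by
          apply Finset.sum_congr rfl
          intro j _
          unfold Sfun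
          rw [Finset.sum_mul_sum]
      _ = ∑ x : ZMod p, ∑ j ∈ range (p-1), ∑ y : ZMod p,
            (F x * (ι x)^(e+(p-1)-j)) * (G y * (ι y)^j) := Finset.sum_comm
      _ = ∑ x : ZMod p, ∑ y : ZMod p, ∑ j ∈ range (p-1),
            (F x * (ι x)^(e+(p-1)-j)) * (G y * (ι y)^j) :=
          Finset.sum_congr rfl fun x _ => Finset.sum_comm
  rw [step1]
  have step2 : ∀ x : ZMod p, ∑ y : ZMod p, ∑ j ∈ range (p-1),
      (F x * (ι x)^(e+(p-1)-j)) * (G y * (ι y)^j)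
      = if x = 0 then 0 else -((ι x)^e) := by
    intro x
    rcases eq_or_ne x 0 with rfl | hx
    · simp [hF0]
    · rw [if_neg hx]
      have hx' : (ι x) ≠ 0 := by
        rw [← map_zero (ZMod.castHom (dvd_refl p) k)]
        exact fun hc => hx ((ZMod.castHom (dvd_refl p) k).injective hc)
      have hy : ∀ y : ZMod p, ∑ j ∈ range (p-1),
          (F x * (ι x)^(e+(p-1)-j)) * (G y * (ι y)^j)
          = if y = x then -(F x * G x * (ι x)^e) else 0 := by
        intro y
        rcases eq_or_ne y 0 with rfl | hy0
        · simp [hG0, if_neg (Ne.symm hx)]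
        · have hterm : ∀ j ∈ range (p-1), (F x * (ι x)^(e+(p-1)-j)) * (G y * (ι y)^j)
              = (F x * G y * (ι x)^e) * (ι (x⁻¹*y))^j := by
            intro j hj
            have hj' : j ≤ p-1 := le_of_lt (mem_range.mp hj)
            rw [show e+(p-1)-j = e + ((p-1)-j) by omega, pow_add]
            rw [pow_sub₀ _ hx' hj', pow_N_eq_one hx, one_mul]
            rw [map_mul, map_inv₀, mul_pow, inv_pow]
            ring
          rw [Finset.sum_congr rfl hterm, ← Finset.mul_sum,
            geom_sum_iota (mul_ne_zero (inv_ne_zero hx) hy0)]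
          by_cases hyx : y = x
          · subst hyx
            rw [if_pos ((inv_mul_eq_one₀ hx).mpr rfl), if_pos rfl]
            ring
          · rw [if_neg (fun hc => hyx ((inv_mul_eq_one₀ hx).mp hc).symm), if_neg hyx,
              mul_zero]
      rw [Finset.sum_congr rfl (fun y _ => hy y)]
      rw [Finset.sum_ite_eq' univ x]
      simp [hFG x hx]
  rw [Finset.sum_congr rfl (fun x _ => step2 x)]
  have h6 : ∀ x : ZMod p, (if x = 0 then (0:k) else -((ι x)^e))
      = -(if x = 0 then (0:k) else (ι x)^e) := by
    intro x; split_ifs <;> simp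
  rw [Finset.sum_congr rfl (fun x _ => h6 x), Finset.sum_neg_distrib, charSum]
  split_ifs <;> simp

theorem core_mult (F G : ZMod p → k) (hF0 : F 0 = 0) (hF1 : F 1 = 1) (hG0 : G 0 = 0)
    (hG1 : G 1 = 1) (hFG : ∀ x : ZMod p, x ≠ 0 → F x * G x = 1)
    (hC : ∀ h : ZMod p, ∑ x : ZMod p, F x * G (x + h) = -1) :
    ∀ x y : ZMod p, F (x*y) = F x * F y := by
  classical
  have hp2 : 2 ≤ p := hp.out.two_le
  have hN1 : 1 ≤ p - 1 := by omega
  -- support sets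
  have hne : ∀ (H : ZMod p → k), H 0 = 0 → H 1 = 1 →
      ((range (p-1)).filter (fun i => Sfun H i ≠ 0)).Nonempty := by
    intro H h0 h1
    by_contra hc
    rw [Finset.not_nonempty_iff_eq_empty, Finset.filter_eq_empty_iff] at hc
    have h2 := inversion H h0 (one_ne_zero : (1:ZMod p) ≠ 0)
    rw [Finset.sum_congr rfl (fun i hi => by
      rw [not_not.mp (hc hi), zero_mul])] at h2
    simp [h1] at h2
  have hTF := hne F hF0 hF1
  have hTG := hne G hG0 hG1
  set TF := ((range (p-1)).filter (fun i => Sfun F i ≠ 0)) with hTFdef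
  set TG := ((range (p-1)).filter (fun i => Sfun G i ≠ 0)) with hTGdef
  set A := TF.min' hTF with hAdef
  set A' := TF.max' hTF with hA'def
  set B := TG.min' hTG with hBdef
  set B' := TG.max' hTG with hB'def
  have hAmem : A < p - 1 ∧ Sfun F A ≠ 0 := by
    have h := Finset.mem_filter.mp (TF.min'_mem hTF)
    exact ⟨Finset.mem_range.mp h.1, h.2⟩
  have hA'mem : A' < p - 1 ∧ Sfun F A' ≠ 0 := by
    have h := Finset.mem_filter.mp (TF.max'_mem hTF)
    exact ⟨Finset.mem_range.mp h.1, h.2⟩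
  have hBmem : B < p - 1 ∧ Sfun G B ≠ 0 := by
    have h := Finset.mem_filter.mp (TG.min'_mem hTG)
    exact ⟨Finset.mem_range.mp h.1, h.2⟩
  have hB'mem : B' < p - 1 ∧ Sfun G B' ≠ 0 := by
    have h := Finset.mem_filter.mp (TG.max'_mem hTG)
    exact ⟨Finset.mem_range.mp h.1, h.2⟩
  have hAA' : A ≤ A' := Finset.min'_le _ _ (Finset.max'_mem _ _)
  have hBB' : B ≤ B' := Finset.min'_le _ _ (Finset.max'_mem _ _)
  have hsuppF : ∀ i, Sfun F i ≠ 0 → (A ≤ i % (p-1) ∧ i % (p-1) ≤ A') := by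
    intro i hi
    have h2 : Sfun F (i % (p-1)) ≠ 0 := by rw [← Sfun_mod F hF0]; exact hi
    have h3 : i % (p-1) ∈ TF :=
      Finset.mem_filter.mpr ⟨Finset.mem_range.mpr (Nat.mod_lt _ (by omega)), h2⟩
    exact ⟨Finset.min'_le _ _ h3, Finset.le_max' _ _ h3⟩
  have hsuppG : ∀ i, Sfun G i ≠ 0 → (B ≤ i % (p-1) ∧ i % (p-1) ≤ B') := by
    intro i hi
    have h2 : Sfun G (i % (p-1)) ≠ 0 := by rw [← Sfun_mod G hG0]; exact hi
    have h3 : i % (p-1) ∈ TG :=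
      Finset.mem_filter.mpr ⟨Finset.mem_range.mpr (Nat.mod_lt _ (by omega)), h2⟩
    exact ⟨Finset.min'_le _ _ h3, Finset.le_max' _ _ h3⟩
  -- A + B = p - 1
  have hub : ¬ (A + B < p - 1) := by
    intro hlt
    have hm := moment F G hC (A+B)
    rw [if_neg (fun hc => hc.2 (Nat.eq_zero_of_dvd_of_lt hc.1 hlt)),
      Finset.sum_eq_single B
        (by
          intro j hj hjB
          rw [Finset.mem_range] at hj
          rcases lt_or_gt_of_ne hjB with h | h
          · have hz : Sfun G j = 0 := by
              by_contra hne'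
              have h5 := (hsuppG j hne').1
              rw [Nat.mod_eq_of_lt (by omega)] at h5; omega
            rw [hz, mul_zero]
          · have hz : Sfun F (A+B-j) = 0 := by
              by_contra hne'
              have h5 := (hsuppF _ hne').1
              rw [Nat.mod_eq_of_lt (by omega)] at h5; omega
            rw [hz, mul_zero, zero_mul])
        (fun hB => absurd (Finset.mem_range.mpr (by omega)) hB)] at hm
    rw [show A+B-B = A by omega] at hm
    have hC0 : (((A+B).choose B : ℕ) : k) ≠ 0 := by
      have h4 : ¬ (p ∣ (A+B).choose B) := by
        intro hdvd
        have h5 := Nat.choose_mul_factorial_mul_factorial (show B ≤ A+B by omega)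
        have h6 : p ∣ (A+B).factorial := by
          rw [← h5]; exact Dvd.dvd.mul_right (Dvd.dvd.mul_right hdvd _) _
        have h7 := (Nat.Prime.dvd_factorial hp.out).mp h6
        omega
      simpa [CharP.cast_eq_zero_iff k p] using h4
    exact (mul_ne_zero (mul_ne_zero (mul_ne_zero (pow_ne_zero _ (neg_ne_zero.mpr
      one_ne_zero)) hC0) hAmem.2) hBmem.2) hm
  have hlb : ¬ (p - 1 < A + B) := by
    intro hgt
    have hm := moment F G hC (p-1)
    rw [if_pos ⟨dvd_rfl, by omega⟩] at hm
    rw [Finset.sum_eq_zero (by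
      intro j hj
      rw [Finset.mem_range] at hj
      by_cases hSG : Sfun G j = 0
      · rw [hSG, mul_zero]
      · by_cases hSF : Sfun F (p-1-j) = 0
        · rw [hSF, mul_zero, zero_mul]
        · exfalso
          have h1 := hsuppG j hSG
          have h2 := hsuppF (p-1-j) hSF
          rcases Nat.eq_zero_or_pos j with rfl | hj0
          · rw [Nat.zero_mod] at h1
            rw [Nat.sub_zero, Nat.mod_self] at h2
            omega
          · rcases eq_or_ne j (p-1) with rfl | hjN
            · rw [Nat.mod_self] at h1
              omega
            · rw [Nat.mod_eq_of_lt (by omega)] at h1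
              rw [Nat.mod_eq_of_lt (by omega)] at h2
              omega)] at hm
    exact one_ne_zero hm.symm
  have hAB : A + B = p - 1 := by omega
  -- A' + B' ≤ p - 1
  have hub' : A' + B' ≤ p - 1 := by
    by_contra hgt
    push_neg at hgt
    have hcv := conv F G hF0 hG0 hFG (A' + B' - (p-1))
    rw [if_neg (fun hc => by
      have := Nat.eq_zero_of_dvd_of_lt hc (by omega)
      omega)] at hcv
    rw [Finset.sum_eq_single B'
      (by
        intro j hj hjB'
        rw [Finset.mem_range] at hj
        by_cases hSG : Sfun G j = 0
        · rw [hSG, mul_zero]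
        · by_cases hSF : Sfun F (A' + B' - (p-1) + (p-1) - j) = 0
          · rw [hSF, zero_mul]
          · exfalso
            have h1 := hsuppG j hSG
            rw [Nat.mod_eq_of_lt (by omega)] at h1
            have h2 := hsuppF _ hSF
            rcases le_or_gt j (A' + B' - (p-1)) with hje | hje
            · have hmod : (A' + B' - (p-1) + (p-1) - j) % (p-1)
                  = A' + B' - (p-1) - j := by
                rw [Nat.mod_eq_sub_mod (by omega), show A' + B' - (p-1) + (p-1) - j
                  - (p-1) = A' + B' - (p-1) - j by omega, Nat.mod_eq_of_lt (by omega)]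
              rw [hmod] at h2
              omega
            · have hmod : (A' + B' - (p-1) + (p-1) - j) % (p-1)
                  = A' + B' - (p-1) + (p-1) - j := Nat.mod_eq_of_lt (by omega)
              rw [hmod] at h2
              omega)
      (fun hB => absurd (Finset.mem_range.mpr (by omega)) hB)] at hcv
    rw [show A' + B' - (p-1) + (p-1) - B' = A' by omega] at hcv
    exact (mul_ne_zero hA'mem.2 hB'mem.2) hcv
  have hA'A : A' = A := by omega
  -- values of F
  have hSFA : -Sfun F A = 1 := by
    have h1 := inversion F hF0 (one_ne_zero : (1:ZMod p) ≠ 0)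
    rw [Finset.sum_eq_single A
      (by
        intro i hi hiA
        rw [Finset.mem_range] at hi
        have hz : Sfun F i = 0 := by
          by_contra hne'
          have h3 := hsuppF i hne'
          rw [Nat.mod_eq_of_lt (by omega)] at h3
          omega
        rw [hz, zero_mul])
      (fun hA => absurd (Finset.mem_range.mpr (by omega)) hA)] at h1
    rw [hF1] at h1
    rw [h1]
    simp
  have hval : ∀ w : ZMod p, w ≠ 0 → F w = (ι w⁻¹) ^ A := by
    intro w hw
    have h1 := inversion F hF0 hw
    rw [Finset.sum_eq_single A
      (by
        intro i hi hiA
        rw [Finset.mem_range] at hi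
        have hz : Sfun F i = 0 := by
          by_contra hne'
          have h3 := hsuppF i hne'
          rw [Nat.mod_eq_of_lt (by omega)] at h3
          omega
        rw [hz, zero_mul])
      (fun hA => absurd (Finset.mem_range.mpr (by omega)) hA)] at h1
    rw [h1, neg_mul_eq_neg_mul, hSFA, one_mul]
  -- conclusion
  intro x y
  rcases eq_or_ne x 0 with rfl | hx
  · rw [zero_mul, hF0, zero_mul]
  rcases eq_or_ne y 0 with rfl | hy
  · rw [mul_zero, hF0, mul_zero]
  rw [hval _ (mul_ne_zero hx hy), hval _ hx, hval _ hy, mul_inv, map_mul, mul_pow]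

end Core

lemma modEq_of_pow_eq_pow {K : Type*} [CommRing K] [IsDomain K] {xi : K} {m : ℕ}
    (hxi : IsPrimitiveRoot xi m) (hm : 0 < m) {a b : ℕ} (h : xi ^ a = xi ^ b) :
    a ≡ b [MOD m] := by
  have hxi0 : xi ≠ 0 := hxi.ne_zero hm.ne'
  rcases le_total a b with hab | hab
  · have h2 : xi ^ a * xi ^ (b - a) = xi ^ a * 1 := by
      rw [mul_one, ← pow_add, show a + (b-a) = b by omega, h]
    have h3 := mul_left_cancel₀ (pow_ne_zero a hxi0) h2
    exact (Nat.modEq_iff_dvd' hab).mpr ((hxi.pow_eq_one_iff_dvd _).mp h3)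
  · have h2 : xi ^ b * xi ^ (a - b) = xi ^ b * 1 := by
      rw [mul_one, ← pow_add, show b + (a-b) = a by omega, h]
    have h3 := mul_left_cancel₀ (pow_ne_zero b hxi0) h2
    exact ((Nat.modEq_iff_dvd' hab).mpr ((hxi.pow_eq_one_iff_dvd _).mp h3)).symm

lemma pow_eq_pow_of_modEq {M : Type*} [Monoid M] {z : M} {m : ℕ} (hz : z ^ m = 1)
    {a b : ℕ} (h : a ≡ b [MOD m]) : z ^ a = z ^ b := by
  rcases le_total a b with hab | hab
  · obtain ⟨t, ht⟩ : ∃ t, b = a + m * t := by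
      obtain ⟨t, ht⟩ := (Nat.modEq_iff_dvd' hab).mp h
      exact ⟨t, by omega⟩
    rw [ht, pow_add, pow_mul, hz, one_pow, mul_one]
  · obtain ⟨t, ht⟩ : ∃ t, a = b + m * t := by
      obtain ⟨t, ht⟩ := (Nat.modEq_iff_dvd' hab).mp h.symm
      exact ⟨t, by omega⟩
    rw [ht, pow_add, pow_mul, hz, one_pow, mul_one]

lemma conj_root_aux {m : ℕ} (hm0 : m ≠ 0) (z : ℂ) (hz : z ^ m = 1) :
    (starRingEnd ℂ) z = z ^ (m-1) := by
  have hz0 : z ≠ 0 := by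
    intro h
    rw [h, zero_pow hm0] at hz
    exact zero_ne_one hz
  have habs : ‖z‖ = 1 := by
    have h1 : ‖z‖ ^ m = 1 := by rw [← norm_pow, hz, norm_one]
    rcases lt_trichotomy ‖z‖ 1 with h | h | h
    · exact absurd h1 (ne_of_lt (pow_lt_one₀ (norm_nonneg z) h hm0))
    · exact h
    · exact absurd h1 (ne_of_gt (one_lt_pow₀ h hm0))
  have h2 : (starRingEnd ℂ) z * z = 1 := by
    rw [mul_comm, Complex.mul_conj]
    norm_cast
    rw [Complex.normSq_eq_norm_sq, habs, one_pow]
  have h3 : z ^ (m-1) * z = 1 := by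
    rw [← pow_succ, show m - 1 + 1 = m by omega, hz]
  have := mul_right_cancel₀ hz0 (h2.trans h3.symm)
  exact this

end CohnAux

open CohnAux

/-- Cohn's converse problem for `F_p` when the nonzero values of `f`
are `m`-th roots of unity with `gcd(m, p) = 1`: such an `f` satisfying Cohn's
condition is completely multiplicative. -/
theorem cohn_converse_of_coprime_roots_of_unity (p : ℕ) [Fact p.Prime]
    (m : ℕ) (hm : 0 < m) (hmp : Nat.gcd m p = 1)
    (f : ZMod p → ℂ) (hf0 : f 0 = 0) (hf1 : f 1 = 1)
    (hfm : ∀ x : ZMod p, x ≠ 0 → f x ^ m = 1)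
    (hcohn : ∀ h : ZMod p, h ≠ 0 →
      ∑ x : ZMod p, f x * (starRingEnd ℂ) (f (x + h)) = -1) :
    ∀ x y : ZMod p, f (x * y) = f x * f y := by
  classical
  have hm0 : m ≠ 0 := hm.ne'
  haveI : NeZero m := ⟨hm0⟩
  set ζ : ℂ := Complex.exp (2 * Real.pi * Complex.I / m) with hζdef
  have hζ : IsPrimitiveRoot ζ m := Complex.isPrimitiveRoot_exp m hm0
  have hpm : ¬ (p ∣ m) := by
    intro hd
    have h2 : p ∣ Nat.gcd m p := Nat.dvd_gcd hd dvd_rfl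
    rw [hmp] at h2
    have h3 := Nat.le_of_dvd one_pos h2
    have h4 := (Fact.out : p.Prime).two_le
    omega
  -- the algebraically closed field of characteristic p
  set k := AlgebraicClosure (ZMod p) with hkdef
  haveI : NeZero ((m : k)) := by
    constructor
    rw [Ne, CharP.cast_eq_zero_iff k p]
    exact hpm
  obtain ⟨ξ, hξ⟩ : ∃ ξ : k, IsPrimitiveRoot ξ m := by
    obtain ⟨ξ, hr⟩ := IsAlgClosed.exists_root (cyclotomic m k)
      (degree_cyclotomic_pos m _ hm).ne'
    exact ⟨ξ, (Polynomial.isRoot_cyclotomic_iff).mp hr⟩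
  -- choice of exponents
  have hex : ∀ x : ZMod p, x ≠ 0 → ∃ i : ℕ, ζ ^ i = f x := by
    intro x hx
    obtain ⟨i, _, hi⟩ := hζ.eq_pow_of_pow_eq_one (hfm x hx)
    exact ⟨i, hi⟩
  set e : ZMod p → ℕ := fun x => if hx : x = 0 then 0 else Classical.choose (hex x hx)
    with hedef
  have he : ∀ (x : ZMod p), x ≠ 0 → ζ ^ (e x) = f x := by
    intro x hx
    simp only [hedef, dif_neg hx]
    exact Classical.choose_spec (hex x hx)
  -- polynomial transfer from ζ to ξ
  have htrans : ∀ P : Polynomial ℤ, aeval ζ P = 0 → aeval ξ P = 0 := by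
    intro P hP
    have hint : IsIntegral ℤ ζ := hζ.isIntegral hm
    have hdvd : minpoly ℤ ζ ∣ P := minpoly.isIntegrallyClosed_dvd hint hP
    rw [← Polynomial.cyclotomic_eq_minpoly hζ hm] at hdvd
    obtain ⟨Q, hQ⟩ := hdvd
    have hroot : aeval ξ (cyclotomic m ℤ) = 0 := by
      rw [aeval_def, ← Polynomial.eval_map, Polynomial.map_cyclotomic]
      exact hξ.isRoot_cyclotomic hm
    rw [hQ, map_mul, hroot, zero_mul]
  have hsum : ∀ (s : Finset (ZMod p)) (n : ZMod p → ℕ),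
      (∑ x ∈ s, ζ ^ (n x)) = -1 → (∑ x ∈ s, ξ ^ (n x)) = -1 := by
    intro s n hs
    have hP : aeval ζ ((∑ x ∈ s, (Polynomial.X : Polynomial ℤ) ^ (n x)) + 1) = 0 := by
      simp only [map_add, map_sum, map_pow, aeval_X, map_one]
      rw [hs]; ring
    have h2 := htrans _ hP
    simp only [map_add, map_sum, map_pow, aeval_X, map_one] at h2
    linear_combination h2
  -- the reduced functions
  set F : ZMod p → k := fun x => if x = 0 then 0 else ξ ^ (e x) with hFdef
  set G : ZMod p → k := fun x => if x = 0 then 0 else ξ ^ ((m-1) * e x) with hGdef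
  have hF0 : F 0 = 0 := by simp [hFdef]
  have hG0 : G 0 = 0 := by simp [hGdef]
  have hdvd1 : m ∣ e 1 := by
    apply (hζ.pow_eq_one_iff_dvd _).mp
    rw [he 1 one_ne_zero, hf1]
  have hF1 : F 1 = 1 := by
    obtain ⟨c, hc⟩ := hdvd1
    simp only [hFdef, if_neg (one_ne_zero : (1 : ZMod p) ≠ 0)]
    rw [hc, pow_mul, hξ.pow_eq_one, one_pow]
  have hG1 : G 1 = 1 := by
    obtain ⟨c, hc⟩ := hdvd1
    simp only [hGdef, if_neg (one_ne_zero : (1 : ZMod p) ≠ 0)]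
    rw [hc, show (m-1) * (m * c) = m * ((m-1) * c) by ring, pow_mul, hξ.pow_eq_one, one_pow]
  have hFG : ∀ x : ZMod p, x ≠ 0 → F x * G x = 1 := by
    intro x hx
    simp only [hFdef, hGdef, if_neg hx]
    obtain ⟨mm, rfl⟩ : ∃ mm, m = mm + 1 := ⟨m-1, by omega⟩
    rw [← pow_add, show e x + (mm+1-1) * e x = (mm+1) * e x by simp; ring]
    rw [pow_mul, hξ.pow_eq_one, one_pow]
  have hC : ∀ h : ZMod p, ∑ x : ZMod p, F x * G (x + h) = -1 := by
    intro h
    rcases eq_or_ne h 0 with rfl | hh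
    · have h1 : ∀ x : ZMod p, F x * G (x + 0) = if x = 0 then (0:k) else 1 := by
        intro x
        rw [add_zero]
        split_ifs with hx
        · subst hx; rw [hF0, zero_mul]
        · exact hFG x hx
      rw [Finset.sum_congr rfl (fun x _ => h1 x), sum_ind]
    · have hc := hcohn h hh
      have hrestrict : ∑ x ∈ univ.filter (fun x : ZMod p => x ≠ 0 ∧ x + h ≠ 0),
          f x * (starRingEnd ℂ) (f (x + h)) = -1 := by
        rw [← hc]
        apply Finset.sum_filter_of_ne
        intro x _ hne
        constructor
        · intro hx; rw [hx, hf0, zero_mul] at hne; exact hne rfl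
        · intro hxh; rw [hxh, hf0, map_zero, mul_zero] at hne; exact hne rfl
      have hterm : ∀ x ∈ univ.filter (fun x : ZMod p => x ≠ 0 ∧ x + h ≠ 0),
          f x * (starRingEnd ℂ) (f (x+h)) = ζ ^ (e x + (m-1) * e (x+h)) := by
        intro x hxs
        obtain ⟨hx, hxh⟩ := (Finset.mem_filter.mp hxs).2
        rw [← he x hx, ← he _ hxh, conj_root_aux hm0 _ (by
          rw [← pow_mul, mul_comm, pow_mul, hζ.pow_eq_one, one_pow]),
          ← pow_mul, ← pow_add, mul_comm (e (x+h)) (m-1)]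
      rw [Finset.sum_congr rfl hterm] at hrestrict
      have h3 := hsum _ _ hrestrict
      have hterm2 : ∀ x : ZMod p, F x * G (x+h)
          = if (x ≠ 0 ∧ x + h ≠ 0) then ξ ^ (e x + (m-1)*e (x+h)) else 0 := by
        intro x
        split_ifs with hx2
        · simp only [hFdef, hGdef, if_neg hx2.1, if_neg hx2.2]
          rw [← pow_add]
        · push_neg at hx2
          rcases eq_or_ne x 0 with rfl | hx
          · rw [hF0, zero_mul]
          · have : x + h = 0 := hx2 hx
            simp only [hGdef, this, if_pos rfl, mul_zero]
      rw [Finset.sum_congr rfl (fun x _ => hterm2 x), ← Finset.sum_filter]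
      exact h3
  have hmult := core_mult F G hF0 hF1 hG0 hG1 hFG hC
  -- lift back to ℂ
  intro x y
  rcases eq_or_ne x 0 with rfl | hx
  · rw [zero_mul, hf0, zero_mul]
  rcases eq_or_ne y 0 with rfl | hy
  · rw [mul_zero, hf0, mul_zero]
  have hxy : x * y ≠ 0 := mul_ne_zero hx hy
  have h1 : ξ ^ (e (x*y)) = ξ ^ (e x + e y) := by
    have h2 := hmult x y
    simp only [hFdef, if_neg hx, if_neg hy, if_neg hxy] at h2
    rw [h2, pow_add]
  have h3 : e (x*y) ≡ e x + e y [MOD m] := modEq_of_pow_eq_pow hξ hm h1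
  have h4 : ζ ^ (e (x*y)) = ζ ^ (e x + e y) := pow_eq_pow_of_modEq hζ.pow_eq_one h3
  rw [← he _ hxy, ← he _ hx, ← he _ hy, ← pow_add]
  exact h4
end

section
/- Let p be a prime, m a positive integer, and f : ZMod p → ℂ with f(0) = 0, f(x)^m = 1 for all x ≠ 0, and ∑_{x ∈ ZMod p} f(x)·conj(f(x+h)) = -1 for every h ≠ 0. Then for every integer j with gcd(j, m) = 1, the function g : ZMod p → ℂ defined by g(x) = f(x)^j also satisfies g(0) = 0, g(x)^m = 1 for x ≠ 0, and ∑_{x ∈ ZMod p} g(x)·conj(g(x+h)) = -1 for every h ≠ 0. -/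
open Polynomial Complex

/-- Key Galois-invariance lemma: if each `t i` is `0` or an `m`-th root of unity and
`∑ t i = -1`, then for `jn` coprime to `m` (and positive), `∑ (t i)^jn = -1`. -/
lemma key_sum_pow {ι : Type*} [Fintype ι] (m : ℕ) (hm : 0 < m) (t : ι → ℂ)
    (ht : ∀ i, t i = 0 ∨ t i ^ m = 1) (hs : ∑ i, t i = -1)
    (jn : ℕ) (hjn : 0 < jn) (hco : Nat.Coprime jn m) :
    ∑ i, (t i) ^ jn = -1 := by
  have : NeZero m := ⟨hm.ne'⟩
  set ζ : ℂ := Complex.exp (2 * Real.pi * Complex.I / m) with hζdef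
  have hζ : IsPrimitiveRoot ζ m := Complex.isPrimitiveRoot_exp m hm.ne'
  -- choose exponents
  have hchoice : ∀ i : ι, ∃ a : ℕ, t i ≠ 0 → ζ ^ a = t i := by
    intro i
    rcases ht i with h0 | h1
    · exact ⟨0, fun h => absurd h0 h⟩
    · obtain ⟨a, _, ha⟩ := hζ.eq_pow_of_pow_eq_one h1
      exact ⟨a, fun _ => ha⟩
  choose a ha using hchoice
  set P : Polynomial ℚ := Polynomial.C 1 + ∑ i : ι, if t i = 0 then 0 else Polynomial.X ^ a i
    with hP
  have haeval : ∀ z : ℂ, Polynomial.aeval z P =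
      1 + ∑ i : ι, if t i = 0 then 0 else z ^ a i := by
    intro z
    simp [hP, Polynomial.aeval_def, Polynomial.eval₂_finset_sum,
      apply_ite (Polynomial.eval₂ (algebraMap ℚ ℂ) z)]
  have hrootζ : Polynomial.aeval ζ P = 0 := by
    rw [haeval]
    have : ∑ i : ι, (if t i = 0 then 0 else ζ ^ a i) = ∑ i : ι, t i := by
      refine Finset.sum_congr rfl fun i _ => ?_
      by_cases h : t i = 0
      · simp [h]
      · simp [h, ha i h]
    rw [this, hs]; ring
  have hdvd : minpoly ℚ ζ ∣ P := minpoly.dvd ℚ ζ hrootζ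
  have hζ' : IsPrimitiveRoot (ζ ^ jn) m := hζ.pow_of_coprime jn hco
  have hmin : minpoly ℚ (ζ ^ jn) = minpoly ℚ ζ := by
    rw [← Polynomial.cyclotomic_eq_minpoly_rat hζ hm,
      ← Polynomial.cyclotomic_eq_minpoly_rat hζ' hm]
  have hrootζ' : Polynomial.aeval (ζ ^ jn) P = 0 := by
    refine Polynomial.aeval_eq_zero_of_dvd_aeval_eq_zero ?_ (minpoly.aeval ℚ (ζ ^ jn))
    rw [hmin]; exact hdvd
  rw [haeval] at hrootζ'
  have : ∑ i : ι, (if t i = 0 then 0 else (ζ ^ jn) ^ a i) = ∑ i : ι, t i ^ jn := by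
    refine Finset.sum_congr rfl fun i _ => ?_
    by_cases h : t i = 0
    · simp [h, zero_pow hjn.ne']
    · rw [if_neg h, ← pow_mul, mul_comm, pow_mul, ha i h]
  rw [this] at hrootζ'
  linear_combination hrootζ'

/-- Cohn's condition (with nonzero values `m`-th roots of unity) is
invariant under the Galois action `f ↦ f^j` for `gcd(j, m) = 1`. -/
theorem cohn_galois_invariance (p : ℕ) [Fact p.Prime] (m : ℕ) (hm : 0 < m)
    (f : ZMod p → ℂ) (hf0 : f 0 = 0)
    (hfm : ∀ x : ZMod p, x ≠ 0 → f x ^ m = 1)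
    (hcohn : ∀ h : ZMod p, h ≠ 0 →
      ∑ x : ZMod p, f x * (starRingEnd ℂ) (f (x + h)) = -1)
    (j : ℤ) (hj : Int.gcd j m = 1) :
    (f 0) ^ j = 0 ∧
    (∀ x : ZMod p, x ≠ 0 → ((f x) ^ j) ^ m = 1) ∧
    ∀ h : ZMod p, h ≠ 0 →
      ∑ x : ZMod p, (f x) ^ j * (starRingEnd ℂ) ((f (x + h)) ^ j) = -1 := by
  have hfield : ∀ x : ZMod p, x ≠ 0 → f x ≠ 0 := by
    intro x hx h0
    have := hfm x hx
    rw [h0, zero_pow hm.ne'] at this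
    exact zero_ne_one this
  -- j = 0 would force m = 1, contradicting Cohn's condition at h = 1
  have hj0 : j ≠ 0 := by
    intro hj0
    subst hj0
    have hm1 : m = 1 := by simpa using hj
    subst hm1
    have hvals : ∀ x : ZMod p, f x = 0 ∨ f x = 1 := by
      intro x
      by_cases hx : x = 0
      · left; rw [hx, hf0]
      · right; simpa using hfm x hx
    have h1 : (1 : ZMod p) ≠ 0 := one_ne_zero
    have hsum := hcohn 1 h1
    have hre : (0:ℝ) ≤ (∑ x : ZMod p, f x * (starRingEnd ℂ) (f (x + 1))).re := by
      rw [Complex.re_sum]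
      refine Finset.sum_nonneg fun x _ => ?_
      rcases hvals x with h | h <;> rcases hvals (x + 1) with h' | h' <;>
        simp [h, h']
    rw [hsum] at hre
    norm_num at hre
  refine ⟨by rw [hf0, zero_zpow j hj0], ?_, ?_⟩
  · intro x hx
    rw [← zpow_natCast (f x ^ j) m, ← zpow_mul, mul_comm, zpow_mul, zpow_natCast, hfm x hx,
      one_zpow]
  · intro h hh
    by_cases hm1 : m = 1
    · -- trivial case m = 1: f ^ j = f
      subst hm1
      have hvals : ∀ x : ZMod p, f x ^ j = f x := by
        intro x
        by_cases hx : x = 0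
        · rw [hx, hf0, zero_zpow j hj0]
        · have : f x = 1 := by simpa using hfm x hx
          rw [this, one_zpow]
      simp only [hvals]
      exact hcohn h hh
    · -- main case
      set jn : ℕ := (j % (m : ℤ)).toNat with hjn_def
      have hmne : (m : ℤ) ≠ 0 := by exact_mod_cast hm.ne'
      have hmodnn : 0 ≤ j % (m : ℤ) := Int.emod_nonneg j hmne
      have hIC : IsCoprime j (m : ℤ) := Int.isCoprime_iff_gcd_eq_one.mpr hj
      have hIC2 : IsCoprime (j % (m : ℤ)) (m : ℤ) := by
        obtain ⟨u, v, huv⟩ := hIC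
        refine ⟨u, v + u * (j / (m : ℤ)), ?_⟩
        rw [Int.emod_def]
        linear_combination huv
      have hgcd : Int.gcd (j % (m : ℤ)) (m : ℤ) = 1 := Int.isCoprime_iff_gcd_eq_one.mp hIC2
      have hco : Nat.Coprime jn m := by
        have hnn : (j % (m : ℤ)).natAbs = jn := by omega
        unfold Nat.Coprime
        rw [← hnn]
        simpa [Int.gcd] using hgcd
      have hjnpos : 0 < jn := by
        rcases Nat.eq_zero_or_pos jn with h0 | h
        · exfalso
          have : j % (m : ℤ) = 0 := by omega
          rw [this] at hgcd
          simp [Int.gcd] at hgcd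
          omega
        · exact h
      -- each t x is 0 or an m-th root of unity
      set t : ZMod p → ℂ := fun x => f x * (starRingEnd ℂ) (f (x + h)) with hT
      have ht : ∀ x, t x = 0 ∨ t x ^ m = 1 := by
        intro x
        by_cases hx : x = 0
        · left; simp [hT, hx, hf0]
        by_cases hxh : x + h = 0
        · left; simp [hT, hxh, hf0]
        · right
          show (f x * (starRingEnd ℂ) (f (x + h))) ^ m = 1
          simp only [mul_pow, ← map_pow, hfm x hx, hfm _ hxh, map_one, mul_one]
      have hkey := key_sum_pow m hm t ht (hcohn h hh) jn hjnpos hco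
      have hterm : ∀ x : ZMod p, f x ^ j * (starRingEnd ℂ) (f (x + h) ^ j) = t x ^ jn := by
        intro x
        have e1 : f x ^ j * (starRingEnd ℂ) (f (x + h) ^ j) = t x ^ j := by
          rw [map_zpow₀, ← mul_zpow]
        rw [e1]
        rcases ht x with h0 | h1
        · rw [h0, zero_zpow j hj0, zero_pow hjnpos.ne']
        · have hne : t x ≠ 0 := by
            intro h0; rw [h0, zero_pow hm.ne'] at h1; exact zero_ne_one h1
          have e2 : t x ^ ((m : ℤ) * (j / (m : ℤ)) + j % (m : ℤ)) = t x ^ jn := by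
            rw [zpow_add₀ hne, zpow_mul, zpow_natCast, h1, one_zpow, one_mul,
              ← zpow_natCast (t x) jn, hjn_def, Int.toNat_of_nonneg hmodnn]
          rwa [Int.mul_ediv_add_emod] at e2
      rw [Finset.sum_congr rfl fun x _ => hterm x]
      exact hkey
end

section
/- Let p be an odd prime and n a positive integer with gcd(n, p) = 1. Suppose f : ZMod p → ℂ satisfies f(0) = 0, f(x)^n = 1 for all x ≠ 0, and ∑_{x ∈ ZMod p} f(x) = 0. Let t be a unit of ZMod p and let a, b be integers such that ∑_{x ≠ 0} f(x)·e^{2πi x / p} = e^{-2πi a / p} · e^{-2πi b / n} · ∑_{x ≠ 0} f(t⁻¹·x)·e^{2πi x / p}. Then a ≡ 0 (mod p). -/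
open Finset Complex Polynomial IntermediateField

set_option maxHeartbeats 1600000

noncomputable section

lemma aux_deg (p n : ℕ) (hp : p.Prime) (hn : 0 < n) (hnp : Nat.gcd n p = 1) :
    p - 1 ≤ (minpoly (ℚ⟮Complex.exp (2 * Real.pi * Complex.I / n)⟯ : IntermediateField ℚ ℂ)
      (Complex.exp (2 * Real.pi * Complex.I / p))).natDegree := by
  set ω : ℂ := Complex.exp (2 * Real.pi * Complex.I / n) with hω
  set ζ : ℂ := Complex.exp (2 * Real.pi * Complex.I / p) with hζ
  set ξ : ℂ := Complex.exp (2 * Real.pi * Complex.I / (↑(n * p))) with hξ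
  have hp0 : p ≠ 0 := hp.pos.ne'
  have hn0 : n ≠ 0 := hn.ne'
  have hnp0 : n * p ≠ 0 := by positivity
  have hcp0 : (p : ℂ) ≠ 0 := Nat.cast_ne_zero.mpr hp0
  have hcn0 : (n : ℂ) ≠ 0 := Nat.cast_ne_zero.mpr hn0
  have hωprim : IsPrimitiveRoot ω n := Complex.isPrimitiveRoot_exp n hn0
  have hζprim : IsPrimitiveRoot ζ p := Complex.isPrimitiveRoot_exp p hp0
  have hξprim : IsPrimitiveRoot ξ (n * p) := Complex.isPrimitiveRoot_exp (n * p) hnp0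
  have hωint : IsIntegral ℚ ω := (hωprim.isIntegral hn).tower_top
  have hζintQ : IsIntegral ℚ ζ := (hζprim.isIntegral hp.pos).tower_top
  have hξint : IsIntegral ℚ ξ := (hξprim.isIntegral (Nat.pos_of_ne_zero hnp0)).tower_top
  set K : IntermediateField ℚ ℂ := ℚ⟮ω⟯ with hK
  have hζint : IsIntegral K ζ := hζintQ.tower_top
  set L : IntermediateField K ℂ := K⟮ζ⟯ with hL
  haveI : FiniteDimensional ℚ K := IntermediateField.adjoin.finiteDimensional hωint
  haveI : FiniteDimensional K L := IntermediateField.adjoin.finiteDimensional hζint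
  haveI : FiniteDimensional ℚ L := Module.Finite.trans K L
  have hξn : ξ ^ n = ζ := by
    rw [← Complex.exp_nat_mul]
    congr 1
    push_cast
    field_simp
  have hξp : ξ ^ p = ω := by
    rw [← Complex.exp_nat_mul]
    congr 1
    push_cast
    field_simp
  have hξ0 : ξ ≠ 0 := Complex.exp_ne_zero _
  obtain ⟨A, B, hAB⟩ : ∃ A B : ℤ, (n : ℤ) * A + (p : ℤ) * B = 1 := by
    refine ⟨Nat.gcdA n p, Nat.gcdB n p, ?_⟩
    have h := Nat.gcd_eq_gcd_ab n p
    rw [hnp] at h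
    exact_mod_cast h.symm
  have hζL : ζ ∈ L := IntermediateField.mem_adjoin_simple_self K ζ
  have hωK : ω ∈ K := IntermediateField.mem_adjoin_simple_self ℚ ω
  have hωL : ω ∈ L := by
    have := L.algebraMap_mem ⟨ω, hωK⟩
    simpa using this
  have hξL : ξ ∈ L := by
    have h1 : ξ = ζ ^ A * ω ^ B := by
      calc ξ = ξ ^ ((n:ℤ) * A + (p:ℤ) * B) := by rw [hAB, zpow_one]
        _ = (ξ ^ (n:ℤ)) ^ A * (ξ ^ (p:ℤ)) ^ B := by
              rw [zpow_add₀ hξ0, zpow_mul, zpow_mul]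
        _ = ζ ^ A * ω ^ B := by rw [zpow_natCast, zpow_natCast, hξn, hξp]
    rw [h1]
    exact mul_mem (zpow_mem hζL A) (zpow_mem hωL B)
  have hdK : Module.finrank ℚ K = n.totient := by
    rw [hK, IntermediateField.adjoin.finrank hωint,
      ← Polynomial.cyclotomic_eq_minpoly_rat hωprim hn, Polynomial.natDegree_cyclotomic]
  have hdKL : Module.finrank K L = (minpoly K ζ).natDegree :=
    IntermediateField.adjoin.finrank hζint
  have htower : Module.finrank ℚ K * Module.finrank K L = Module.finrank ℚ L :=
    Module.finrank_mul_finrank ℚ K L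
  have hle : (ℚ⟮ξ⟯ : IntermediateField ℚ ℂ) ≤ L.restrictScalars ℚ := by
    rw [IntermediateField.adjoin_le_iff]
    intro x hx
    rw [Set.mem_singleton_iff] at hx
    subst hx
    exact hξL
  have hxi : Module.finrank ℚ (ℚ⟮ξ⟯ : IntermediateField ℚ ℂ) = (n * p).totient := by
    rw [IntermediateField.adjoin.finrank hξint,
      ← Polynomial.cyclotomic_eq_minpoly_rat hξprim (Nat.pos_of_ne_zero hnp0),
      Polynomial.natDegree_cyclotomic]
  have hmono : Module.finrank ℚ (ℚ⟮ξ⟯ : IntermediateField ℚ ℂ)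
      ≤ Module.finrank ℚ (L.restrictScalars ℚ) := by
    haveI : Module.Finite ℚ
        (Subalgebra.toSubmodule (L.restrictScalars ℚ).toSubalgebra) :=
      (inferInstance : FiniteDimensional ℚ L)
    exact Submodule.finrank_mono (show (ℚ⟮ξ⟯ : IntermediateField ℚ ℂ).toSubalgebra.toSubmodule
      ≤ (L.restrictScalars ℚ).toSubalgebra.toSubmodule from hle)
  have hres : Module.finrank ℚ (L.restrictScalars ℚ) = Module.finrank ℚ L := rfl
  have htot : (n * p).totient = n.totient * (p - 1) := by
    rw [Nat.totient_mul hnp, Nat.totient_prime hp]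
  have hfin : n.totient * (p - 1) ≤ n.totient * Module.finrank K L := by
    rw [← htot]
    calc (n * p).totient = Module.finrank ℚ (ℚ⟮ξ⟯ : IntermediateField ℚ ℂ) := hxi.symm
      _ ≤ Module.finrank ℚ (L.restrictScalars ℚ) := hmono
      _ = Module.finrank ℚ L := hres
      _ = Module.finrank ℚ K * Module.finrank K L := htower.symm
      _ = n.totient * Module.finrank K L := by rw [hdK]
  have := Nat.le_of_mul_le_mul_left hfin (Nat.totient_pos.mpr hn)
  rwa [hdKL] at this

lemma aux_const (p : ℕ) [NeZero p] (hp : p.Prime) (K : IntermediateField ℚ ℂ) (ζ : ℂ)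
    (hζprim : IsPrimitiveRoot ζ p)
    (hli : LinearIndependent K (fun i : Fin (p - 1) => ζ ^ (i : ℕ)))
    (c : ZMod p → K)
    (hrel : ∑ x : ZMod p, (c x : ℂ) * ζ ^ x.val = 0) :
    ∀ x, c x = c (-1) := by
  haveI : NeZero p := ⟨hp.pos.ne'⟩
  have hp1 : 1 < p := hp.one_lt
  have hgeom : ∑ x : ZMod p, ζ ^ x.val = 0 := by
    rw [← hζprim.geom_sum_eq_zero hp1]
    refine Finset.sum_nbij' (fun x : ZMod p => x.val) (fun i : ℕ => (i : ZMod p))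
      (fun a _ => mem_range.mpr (ZMod.val_lt a)) (fun i _ => mem_univ _)
      (fun a _ => ZMod.natCast_rightInverse a)
      (fun i hi => ZMod.val_cast_of_lt (mem_range.mp hi)) (fun a _ => rfl)
  have hrel2 : ∑ x : ZMod p, ((c x - c (-1) : K) : ℂ) * ζ ^ x.val = 0 := by
    have h1 : ∑ x : ZMod p, ((c x : ℂ) - (c (-1) : ℂ)) * ζ ^ x.val = 0 := by
      simp only [sub_mul]
      rw [Finset.sum_sub_distrib, hrel, ← Finset.mul_sum, hgeom, mul_zero, sub_zero]
    simpa using h1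
  have hvneg : (-1 : ZMod p).val = p - 1 := by
    cases p with
    | zero => omega
    | succ m => simpa using ZMod.val_neg_one m
  have hval : ∀ x : ZMod p, x ≠ -1 → x.val < p - 1 := by
    intro x hx
    have h1 : x.val < p := ZMod.val_lt x
    have h2 : x.val ≠ p - 1 := by
      intro h
      apply hx
      have := ZMod.natCast_rightInverse (n := p) x
      rw [← this, h, ← hvneg, ZMod.natCast_rightInverse]
    omega
  have hrel3 : ∑ x ∈ (univ.erase (-1 : ZMod p)), ((c x - c (-1) : K) : ℂ) * ζ ^ x.val = 0 := by
    rw [Finset.sum_erase _ (by simp)]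
    exact hrel2
  have hrel4 : ∑ i : Fin (p - 1),
      (c ((i : ℕ) : ZMod p) - c (-1)) • ζ ^ (i : ℕ) = 0 := by
    rw [← hrel3]
    refine Finset.sum_bij' (fun (i : Fin (p-1)) _ => ((i : ℕ) : ZMod p))
      (fun (x : ZMod p) hx => (⟨x.val, hval x (Finset.ne_of_mem_erase hx)⟩ : Fin (p - 1)))
      ?_ ?_ ?_ ?_ ?_
    · intro i _
      refine Finset.mem_erase.mpr ⟨?_, mem_univ _⟩
      intro h
      have h' : ((i : ℕ) : ZMod p) = -1 := h
      have : ((i : ℕ) : ZMod p).val = (-1 : ZMod p).val := by rw [h']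
      rw [ZMod.val_cast_of_lt (by omega : (i : ℕ) < p), hvneg] at this
      omega
    · intro x _; exact mem_univ _
    · intro i _
      ext
      simp [ZMod.val_cast_of_lt (show (i : ℕ) < p by omega)]
    · intro x hx
      exact ZMod.natCast_rightInverse x
    · intro i _
      have hlt : (i : ℕ) < p := by omega
      show _ = (((c ((i : ℕ) : ZMod p) - c (-1)) : K) : ℂ) * ζ ^ (((i : ℕ) : ZMod p)).val
      rw [ZMod.val_cast_of_lt hlt, Algebra.smul_def]
      rfl
  have key := Fintype.linearIndependent_iff.mp hli
    (fun i => c ((i : ℕ) : ZMod p) - c (-1)) hrel4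
  intro x
  by_cases hx : x = -1
  · rw [hx]
  · have h := key ⟨x.val, hval x hx⟩
    have h2 : c ((x.val : ℕ) : ZMod p) - c (-1) = 0 := h
    rw [ZMod.natCast_rightInverse x] at h2
    exact sub_eq_zero.mp h2

/-- if the nonzero values of `f` are `n`-th roots of unity with
`gcd(n, p) = 1`, `∑ x, f x = 0`, `t` is a unit of `ZMod p`, and
`∑_{x ≠ 0} f x ζ_p^x = ζ_p^{-a} ζ_n^{-b} ∑_{x ≠ 0} f (t⁻¹ x) ζ_p^x`,
then `a ≡ 0 (mod p)`. -/
theorem exponent_a_vanishes (p : ℕ) [Fact p.Prime] (hp2 : p ≠ 2)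
    (n : ℕ) (hn : 0 < n) (hnp : Nat.gcd n p = 1)
    (f : ZMod p → ℂ) (hf0 : f 0 = 0)
    (hfn : ∀ x : ZMod p, x ≠ 0 → f x ^ n = 1)
    (hsum : ∑ x : ZMod p, f x = 0)
    (t : (ZMod p)ˣ) (a b : ℤ)
    (heq : ∑ x ∈ univ.filter (fun x : ZMod p => x ≠ 0),
        f x * Complex.exp (2 * Real.pi * Complex.I * x.val / p)
      = Complex.exp (-(2 * Real.pi * Complex.I * a / p)) *
          Complex.exp (-(2 * Real.pi * Complex.I * b / n)) *
          ∑ x ∈ univ.filter (fun x : ZMod p => x ≠ 0),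
            f (((t⁻¹ : (ZMod p)ˣ) : ZMod p) * x) *
              Complex.exp (2 * Real.pi * Complex.I * x.val / p)) :
    (p : ℤ) ∣ a := by
  have hp : p.Prime := Fact.out
  haveI : NeZero p := ⟨hp.pos.ne'⟩
  haveI : NeZero n := ⟨hn.ne'⟩
  have hp0 : p ≠ 0 := hp.pos.ne'
  have hcp0 : (p : ℂ) ≠ 0 := Nat.cast_ne_zero.mpr hp0
  by_contra hnd
  have haz : ((a : ℤ) : ZMod p) ≠ 0 := fun h =>
    hnd ((ZMod.intCast_zmod_eq_zero_iff_dvd a p).mp h)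
  obtain ⟨ω, hωdef⟩ : ∃ ω : ℂ, ω = Complex.exp (2 * Real.pi * Complex.I / n) := ⟨_, rfl⟩
  obtain ⟨ζ, hζdef⟩ : ∃ ζ : ℂ, ζ = Complex.exp (2 * Real.pi * Complex.I / p) := ⟨_, rfl⟩
  obtain ⟨E, hEdef⟩ : ∃ E : ZMod p → ℂ,
      E = fun x => Complex.exp (2 * Real.pi * Complex.I * x.val / p) := ⟨_, rfl⟩
  have hEx : ∀ x : ZMod p,
      Complex.exp (2 * Real.pi * Complex.I * x.val / p) = E x := fun x => by rw [hEdef]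
  simp only [hEx] at heq
  have hωprim : IsPrimitiveRoot ω n := by
    rw [hωdef]; exact Complex.isPrimitiveRoot_exp n hn.ne'
  have hζprim : IsPrimitiveRoot ζ p := by
    rw [hζdef]; exact Complex.isPrimitiveRoot_exp p hp0
  have hωK : ω ∈ (ℚ⟮ω⟯ : IntermediateField ℚ ℂ) := IntermediateField.mem_adjoin_simple_self ℚ ω
  have hEζ : ∀ x : ZMod p, E x = ζ ^ x.val := by
    intro x
    rw [← hEx x, hζdef, ← Complex.exp_nat_mul]
    congr 1
    ring
  have hEadd : ∀ (y : ZMod p) (m : ℤ),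
      E (y + (m : ZMod p)) = E y * Complex.exp (2 * Real.pi * Complex.I * m / p) := by
    intro y m
    obtain ⟨k, hk⟩ : ∃ k : ℤ, ((y + (m : ZMod p)).val : ℤ) = (y.val : ℤ) + m + p * k := by
      have h1 : (((y + (m : ZMod p)).val : ℤ) : ZMod p) = (((y.val : ℤ) + m : ℤ) : ZMod p) := by
        push_cast
        rw [ZMod.natCast_rightInverse, ZMod.natCast_rightInverse]
      obtain ⟨k, hk⟩ := ((ZMod.intCast_eq_intCast_iff _ _ _).mp h1).dvd
      exact ⟨-k, by linear_combination -hk⟩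
    have hcast : (((y + (m : ZMod p)).val : ℕ) : ℂ)
        = (y.val : ℂ) + (m : ℂ) + (p : ℂ) * (k : ℂ) := by
      exact_mod_cast congrArg (Int.cast : ℤ → ℂ) hk
    have hsplit : 2 * Real.pi * Complex.I * (((y + (m : ZMod p)).val : ℕ) : ℂ) / p
        = 2 * Real.pi * Complex.I * (y.val : ℂ) / p + 2 * Real.pi * Complex.I * m / p
          + (k : ℂ) * (2 * Real.pi * Complex.I) := by
      rw [hcast]
      field_simp
    rw [← hEx, ← hEx, hsplit, Complex.exp_add, Complex.exp_add,
      Complex.exp_int_mul_two_pi_mul_I, mul_one]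
  -- reformulate heq
  have hA : Complex.exp (-(2 * Real.pi * Complex.I * a / p))
      = Complex.exp (2 * Real.pi * Complex.I * ((-a : ℤ) : ℂ) / p) := by
    congr 1
    push_cast
    ring
  have hB : Complex.exp (-(2 * Real.pi * Complex.I * b / n)) = ω ^ (-b : ℤ) := by
    rw [hωdef, ← Complex.exp_int_mul]
    congr 1
    push_cast
    ring
  have hfilter1 : ∑ x ∈ univ.filter (fun x : ZMod p => x ≠ 0), f x * E x
      = ∑ x : ZMod p, f x * E x :=
    Finset.sum_filter_of_ne (fun x _ hfx hx0 => hfx (by rw [hx0, hf0, zero_mul]))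
  have hfilter2 : ∑ x ∈ univ.filter (fun x : ZMod p => x ≠ 0),
        f (((t⁻¹ : (ZMod p)ˣ) : ZMod p) * x) * E x
      = ∑ x : ZMod p, f (((t⁻¹ : (ZMod p)ˣ) : ZMod p) * x) * E x :=
    Finset.sum_filter_of_ne (fun x _ hfx hx0 => hfx (by rw [hx0, mul_zero, hf0, zero_mul]))
  have hstep3 : ∑ y : ZMod p, f y * E ((t : ZMod p) * y)
      = ∑ x : ZMod p, f (((t⁻¹ : (ZMod p)ˣ) : ZMod p) * x) * E x := by
    refine Fintype.sum_bijective (fun y : ZMod p => (t : ZMod p) * y)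
      (Equiv.mulLeft₀ (t : ZMod p) (Units.ne_zero t)).bijective _ _ (fun y => ?_)
    have hcancel : ((t⁻¹ : (ZMod p)ˣ) : ZMod p) * ((t : ZMod p) * y) = y := by
      rw [← mul_assoc, ← Units.val_mul, inv_mul_cancel, Units.val_one, one_mul]
    rw [hcancel]
  have hstep5 : ∑ x : ZMod p, f (((t⁻¹ : (ZMod p)ˣ) : ZMod p) * (x + ((a : ℤ) : ZMod p))) * E x
      = ∑ y : ZMod p, f y * E ((t : ZMod p) * y + ((-a : ℤ) : ZMod p)) := by
    refine Fintype.sum_bijective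
      (fun x : ZMod p => ((t⁻¹ : (ZMod p)ˣ) : ZMod p) * (x + ((a : ℤ) : ZMod p)))
      (((Equiv.mulLeft₀ ((t⁻¹ : (ZMod p)ˣ) : ZMod p) (Units.ne_zero _)).bijective).comp
        (Equiv.addRight ((a : ℤ) : ZMod p)).bijective) _ _ (fun x => ?_)
    have hcancel : (t : ZMod p) * (((t⁻¹ : (ZMod p)ˣ) : ZMod p) * (x + ((a : ℤ) : ZMod p)))
        + ((-a : ℤ) : ZMod p) = x := by
      rw [← mul_assoc, ← Units.val_mul, mul_inv_cancel, Units.val_one, one_mul]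
      push_cast
      ring
    rw [hcancel]
  have heq2 : ∑ x : ZMod p, f x * E x
      = ω ^ (-b : ℤ) *
        ∑ x : ZMod p, f (((t⁻¹ : (ZMod p)ˣ) : ZMod p) * (x + ((a : ℤ) : ZMod p))) * E x := by
    calc ∑ x : ZMod p, f x * E x
        = ∑ x ∈ univ.filter (fun x : ZMod p => x ≠ 0), f x * E x := hfilter1.symm
      _ = Complex.exp (-(2 * Real.pi * Complex.I * a / p)) *
            Complex.exp (-(2 * Real.pi * Complex.I * b / n)) *
            ∑ x ∈ univ.filter (fun x : ZMod p => x ≠ 0),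
              f (((t⁻¹ : (ZMod p)ˣ) : ZMod p) * x) * E x := heq
      _ = Complex.exp (-(2 * Real.pi * Complex.I * a / p)) * ω ^ (-b : ℤ) *
            ∑ y : ZMod p, f y * E ((t : ZMod p) * y) := by
          rw [hB, hfilter2, hstep3]
      _ = ω ^ (-b : ℤ) * ∑ y : ZMod p, f y *
            (E ((t : ZMod p) * y) * Complex.exp (-(2 * Real.pi * Complex.I * a / p))) := by
          rw [Finset.mul_sum, Finset.mul_sum]
          exact Finset.sum_congr rfl fun y _ => by ring
      _ = ω ^ (-b : ℤ) * ∑ y : ZMod p, f y *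
            E ((t : ZMod p) * y + ((-a : ℤ) : ZMod p)) := by
          congr 1
          refine Finset.sum_congr rfl fun y _ => ?_
          rw [hEadd ((t : ZMod p) * y) (-a), hA]
      _ = ω ^ (-b : ℤ) *
            ∑ x : ZMod p, f (((t⁻¹ : (ZMod p)ˣ) : ZMod p) * (x + ((a : ℤ) : ZMod p))) * E x := by
          rw [hstep5]
  -- the coefficient function
  have hfK : ∀ x : ZMod p, f x ∈ (ℚ⟮ω⟯ : IntermediateField ℚ ℂ) := by
    intro x
    by_cases hx : x = 0
    · rw [hx, hf0]; exact zero_mem _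
    · obtain ⟨i, _, hi⟩ := hωprim.eq_pow_of_pow_eq_one (hfn x hx)
      rw [← hi]; exact pow_mem hωK i
  have hgK : ∀ x : ZMod p,
      f x - ω ^ (-b : ℤ) * f (((t⁻¹ : (ZMod p)ˣ) : ZMod p) * (x + ((a : ℤ) : ZMod p)))
        ∈ (ℚ⟮ω⟯ : IntermediateField ℚ ℂ) :=
    fun x => sub_mem (hfK x) (mul_mem (zpow_mem hωK (-b)) (hfK _))
  obtain ⟨G, hG⟩ : ∃ G : ZMod p → (ℚ⟮ω⟯ : IntermediateField ℚ ℂ), G = fun x =>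
      ⟨f x - ω ^ (-b : ℤ) * f (((t⁻¹ : (ZMod p)ˣ) : ZMod p) * (x + ((a : ℤ) : ZMod p))),
        hgK x⟩ := ⟨_, rfl⟩
  have hGcoe : ∀ x : ZMod p, (G x : ℂ)
      = f x - ω ^ (-b : ℤ) * f (((t⁻¹ : (ZMod p)ˣ) : ZMod p) * (x + ((a : ℤ) : ZMod p))) :=
    fun x => by rw [hG]
  have hGrel : ∑ x : ZMod p, (G x : ℂ) * ζ ^ x.val = 0 := by
    have h1 : ∑ x : ZMod p, (G x : ℂ) * E x = 0 := by
      simp only [hGcoe, sub_mul]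
      have hre : ∑ x : ZMod p,
          (ω ^ (-b : ℤ) * f (((t⁻¹ : (ZMod p)ˣ) : ZMod p) * (x + ((a : ℤ) : ZMod p)))) * E x
          = ω ^ (-b : ℤ) * ∑ x : ZMod p,
              f (((t⁻¹ : (ZMod p)ˣ) : ZMod p) * (x + ((a : ℤ) : ZMod p))) * E x := by
        rw [Finset.mul_sum]
        exact Finset.sum_congr rfl fun x _ => by ring
      rw [Finset.sum_sub_distrib, hre, ← heq2, sub_self]
    simp only [hEζ] at h1
    exact h1
  have hli : LinearIndependent (ℚ⟮ω⟯ : IntermediateField ℚ ℂ)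
      (fun i : Fin (p - 1) => ζ ^ (i : ℕ)) := by
    have hd : p - 1 ≤ (minpoly (ℚ⟮ω⟯ : IntermediateField ℚ ℂ) ζ).natDegree := by
      rw [hωdef, hζdef]
      exact aux_deg p n hp hn hnp
    exact (linearIndependent_pow ζ).comp (Fin.castLE hd) (Fin.castLE_injective hd)
  have hconst := aux_const p hp ℚ⟮ω⟯ ζ hζprim hli G hGrel
  -- sum of G is zero
  have hsum2 : ∑ x : ZMod p, f (((t⁻¹ : (ZMod p)ˣ) : ZMod p) * (x + ((a : ℤ) : ZMod p))) = 0 := by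
    rw [← hsum]
    exact Fintype.sum_bijective
      (fun x : ZMod p => ((t⁻¹ : (ZMod p)ˣ) : ZMod p) * (x + ((a : ℤ) : ZMod p)))
      (((Equiv.mulLeft₀ ((t⁻¹ : (ZMod p)ˣ) : ZMod p) (Units.ne_zero _)).bijective).comp
        (Equiv.addRight ((a : ℤ) : ZMod p)).bijective) _ _ (fun x => rfl)
  have hGsum : ∑ x : ZMod p, (G x : ℂ) = 0 := by
    simp only [hGcoe]
    rw [Finset.sum_sub_distrib, hsum, ← Finset.mul_sum, hsum2, mul_zero, sub_zero]
  have hGzero : (G (-1) : ℂ) = 0 := by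
    have h1 : (p : ℂ) * (G (-1) : ℂ) = 0 := by
      calc (p : ℂ) * (G (-1) : ℂ) = ∑ _x : ZMod p, (G (-1) : ℂ) := by
            rw [Finset.sum_const, Finset.card_univ, ZMod.card, nsmul_eq_mul]
        _ = ∑ x : ZMod p, (G x : ℂ) := Finset.sum_congr rfl fun x _ => by rw [hconst x]
        _ = 0 := hGsum
    rcases mul_eq_zero.mp h1 with h | h
    · exact absurd h hcp0
    · exact h
  -- evaluate at -a
  have hxa : (-(((a : ℤ) : ZMod p))) ≠ 0 := neg_ne_zero.mpr haz
  have hfa : f (-(((a : ℤ) : ZMod p))) = 0 := by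
    have h2 : (G (-(((a : ℤ) : ZMod p))) : ℂ) = 0 := by rw [hconst _, hGzero]
    rw [hGcoe] at h2
    have h3 : -(((a : ℤ) : ZMod p)) + ((a : ℤ) : ZMod p) = 0 := by ring
    rw [h3, mul_zero, hf0, mul_zero, sub_zero] at h2
    exact h2
  have hcontr := hfn _ hxa
  rw [hfa, zero_pow hn.ne'] at hcontr
  exact zero_ne_one hcontr

end
end

section
/- Let p be a prime, k ≥ 1 an integer, and n a positive integer with gcd(n, p) = 1. Let ζ_n = e^{2πi/n}, ζ_p = e^{2πi/p}, ζ_{p^k} = e^{2πi/p^k} ∈ ℂ, and let K = ℚ(ζ_n) ⊆ ℂ. Suppose a_0, a_1, …, a_{p^k - 1} ∈ K and ∑_{i=0}^{p^k - 1} a_i·ζ_{p^k}^i lies in the subfield K(ζ_p) = ℚ(ζ_n, ζ_p) of ℂ. Then ∑_{i=0}^{p^k - 1} a_i·ζ_{p^k}^i = ∑_{j=0}^{p-1} a_{p^{k-1}·j}·ζ_p^j. -/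
set_option synthInstance.maxHeartbeats 1000000
set_option maxHeartbeats 2000000

open Complex Polynomial IntermediateField

private lemma aux_exp_pow (m l : ℕ) (hm : 0 < m) (hl : 0 < l) :
    Complex.exp (2 * Real.pi * Complex.I / ((m * l : ℕ) : ℂ)) ^ l
      = Complex.exp (2 * Real.pi * Complex.I / m) := by
  rw [← Complex.exp_nat_mul]
  congr 1
  have hm' : (m : ℂ) ≠ 0 := Nat.cast_ne_zero.mpr hm.ne'
  have hl' : (l : ℂ) ≠ 0 := Nat.cast_ne_zero.mpr hl.ne'
  push_cast
  field_simp

set_option maxHeartbeats 1000000 in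
private lemma aux_adjoin_pair (n m : ℕ) (hn : 0 < n) (hm : 0 < m) (h : Nat.Coprime n m) :
    IntermediateField.adjoin ℚ ({Complex.exp (2 * Real.pi * Complex.I / n),
        Complex.exp (2 * Real.pi * Complex.I / m)} : Set ℂ)
      = IntermediateField.adjoin ℚ
          ({Complex.exp (2 * Real.pi * Complex.I / ((n * m : ℕ) : ℂ))} : Set ℂ) := by
  have hn' : (n : ℂ) ≠ 0 := Nat.cast_ne_zero.mpr hn.ne'
  have hm' : (m : ℂ) ≠ 0 := Nat.cast_ne_zero.mpr hm.ne'
  apply le_antisymm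
  · rw [IntermediateField.adjoin_le_iff]
    rintro x (rfl | rfl)
    · rw [← aux_exp_pow n m hn hm]
      exact pow_mem (IntermediateField.mem_adjoin_simple_self ℚ _) m
    · rw [← aux_exp_pow m n hm hn, Nat.mul_comm m n]
      exact pow_mem (IntermediateField.mem_adjoin_simple_self ℚ _) n
  · rw [IntermediateField.adjoin_le_iff]
    rintro x rfl
    obtain ⟨u, v, huv⟩ := (Nat.isCoprime_iff_coprime.mpr h)
    have hc : (u : ℂ) * n + (v : ℂ) * m = 1 := by exact_mod_cast congrArg (Int.cast : ℤ → ℂ) huv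
    have key : Complex.exp (2 * Real.pi * Complex.I / ((n * m : ℕ) : ℂ))
        = Complex.exp (2 * Real.pi * Complex.I / m) ^ u
          * Complex.exp (2 * Real.pi * Complex.I / n) ^ v := by
      rw [← Complex.exp_int_mul, ← Complex.exp_int_mul, ← Complex.exp_add]
      congr 1
      push_cast
      have h3 : (u : ℂ) * (2 * Real.pi * Complex.I / m) + (v : ℂ) * (2 * Real.pi * Complex.I / n)
          = (((u : ℂ) * n + (v : ℂ) * m) * (2 * Real.pi * Complex.I)) / ((n : ℂ) * m) := by
        field_simp
      rw [h3, hc, one_mul]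
    rw [key]
    exact mul_mem
      (zpow_mem (IntermediateField.subset_adjoin _ _ (by right; rfl)) u)
      (zpow_mem (IntermediateField.subset_adjoin _ _ (by left; rfl)) v)


private lemma aux_finrank (m : ℕ) (hm : 0 < m) (ζ : ℂ) (hζ : IsPrimitiveRoot ζ m) :
    Module.finrank ℚ ↥(IntermediateField.adjoin ℚ ({ζ} : Set ℂ)) = m.totient := by
  have hint : IsIntegral ℚ ζ := (hζ.isIntegral hm).tower_top
  set m' : ℕ+ := ⟨m, hm⟩ with hm'def
  have hζ' : IsPrimitiveRoot ζ (m' : ℕ) := hζ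
  have h1 : IsCyclotomicExtension {(m' : ℕ)} ℚ (Algebra.adjoin ℚ ({ζ} : Set ℂ)) :=
    hζ'.adjoin_isCyclotomicExtension ℚ
  have h2 : (IntermediateField.adjoin ℚ ({ζ} : Set ℂ)).toSubalgebra = Algebra.adjoin ℚ {ζ} :=
    IntermediateField.adjoin_simple_toSubalgebra_of_isAlgebraic hint.isAlgebraic
  have h3 : IsCyclotomicExtension {(m' : ℕ)} ℚ (IntermediateField.adjoin ℚ ({ζ} : Set ℂ)) := by
    refine IsCyclotomicExtension.equiv _ _ _ (h := ?_)
      (.refl : (IntermediateField.adjoin ℚ ({ζ} : Set ℂ)).toSubalgebra ≃ₐ[ℚ] _)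
    rw [h2]; exact h1
  have := IsCyclotomicExtension.finrank (n := m') (K := ℚ)
    (L := IntermediateField.adjoin ℚ ({ζ} : Set ℂ))
    (Polynomial.cyclotomic.irreducible_rat (by exact_mod_cast hm))
  exact this


private lemma aux_indep (p : ℕ) [hfact : Fact p.Prime] (k : ℕ) (hk : 1 ≤ k)
    (n : ℕ) (hn : 0 < n) (hnp : Nat.gcd n p = 1) (ζn ζp ζ : ℂ)
    (hζn : ζn = Complex.exp (2 * Real.pi * Complex.I / n))
    (hζp : ζp = Complex.exp (2 * Real.pi * Complex.I / p))
    (hζ : ζ = Complex.exp (2 * Real.pi * Complex.I / ((p ^ k : ℕ) : ℂ)))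
    (c : ℕ → ℂ)
    (hc : ∀ r, r < p ^ (k - 1) → c r ∈ IntermediateField.adjoin ℚ ({ζn, ζp} : Set ℂ))
    (hsum : ∑ r ∈ Finset.range (p ^ (k - 1)), c r * ζ ^ r = 0) :
    ∀ r, r < p ^ (k - 1) → c r = 0 := by
  have hp : p.Prime := hfact.out
  set d : ℕ := p ^ (k - 1) with hddef
  have hd : 0 < d := pow_pos hp.pos _
  have hpd : p * d = p ^ k := by
    rw [hddef, ← pow_succ']
    congr 1
    omega
  have hζpd : ζ ^ d = ζp := by
    rw [hζ, hζp, ← hpd]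
    exact aux_exp_pow p d hp.pos hd
  set F : IntermediateField ℚ ℂ := IntermediateField.adjoin ℚ ({ζn, ζp} : Set ℂ) with hFdef
  have hζnF : ζn ∈ F := IntermediateField.subset_adjoin _ _ (by left; rfl)
  have hζpF : ζp ∈ F := IntermediateField.subset_adjoin _ _ (by right; rfl)
  -- integrality of ζ over F
  have hζprim : IsPrimitiveRoot ζ (p ^ k) := by
    rw [hζ]; exact Complex.isPrimitiveRoot_exp _ (pow_pos hp.pos k).ne'
  have hintQ : IsIntegral ℚ ζ := (hζprim.isIntegral (pow_pos hp.pos k)).tower_top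
  have hintF : IsIntegral F ζ := hintQ.tower_top
  -- the three degree computations
  classical
  have hcop : Nat.Coprime n p := hnp
  have hcopk : Nat.Coprime n (p ^ k) := hcop.pow_right k
  have hF2 : F = IntermediateField.adjoin ℚ
      ({Complex.exp (2 * Real.pi * Complex.I / ((n * p : ℕ) : ℂ))} : Set ℂ) := by
    rw [hFdef, hζn, hζp]
    exact aux_adjoin_pair n p hn hp.pos hcop
  have hrankF : Module.finrank ℚ F = (n * p).totient := by
    rw [hF2]
    exact aux_finrank (n * p) (Nat.mul_pos hn hp.pos) _
      (Complex.isPrimitiveRoot_exp _ (Nat.mul_pos hn hp.pos).ne')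
  have htop : IntermediateField.restrictScalars ℚ (IntermediateField.adjoin F ({ζ} : Set ℂ))
      = IntermediateField.adjoin ℚ
          ({Complex.exp (2 * Real.pi * Complex.I / ((n * p ^ k : ℕ) : ℂ))} : Set ℂ) := by
    erw [IntermediateField.restrictScalars_adjoin_eq_sup]
    rw [hFdef, ← IntermediateField.adjoin_union]
    have hsets : ({ζn, ζp} : Set ℂ) ∪ {ζ} = {ζn, ζp, ζ} := by
      ext x
      simp only [Set.union_singleton, Set.mem_insert_iff, Set.mem_singleton_iff]
      tauto
    rw [hsets]
    have h1 : IntermediateField.adjoin ℚ ({ζn, ζp, ζ} : Set ℂ)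
        = IntermediateField.adjoin ℚ ({ζn, ζ} : Set ℂ) := by
      apply le_antisymm
      · rw [IntermediateField.adjoin_le_iff]
        rintro x (rfl | rfl | rfl)
        · exact IntermediateField.subset_adjoin _ _ (by left; rfl)
        · rw [← hζpd]
          exact pow_mem (IntermediateField.subset_adjoin _ _ (by right; rfl)) d
        · exact IntermediateField.subset_adjoin _ _ (by right; rfl)
      · apply IntermediateField.adjoin.mono
        rintro x (rfl | rfl)
        · left; rfl
        · right; right; rfl
    rw [h1, hζn, hζ]
    exact aux_adjoin_pair n (p ^ k) hn (pow_pos hp.pos k) hcopk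
  have hranktop : Module.finrank ℚ
      ↥(IntermediateField.restrictScalars ℚ (IntermediateField.adjoin F ({ζ} : Set ℂ)))
      = (n * p ^ k).totient := by
    rw [htop]
    exact aux_finrank _ (Nat.mul_pos hn (pow_pos hp.pos k)) _
      (Complex.isPrimitiveRoot_exp _ (Nat.mul_pos hn (pow_pos hp.pos k)).ne')
  have htower : Module.finrank ℚ F
        * Module.finrank F ↥(IntermediateField.adjoin F ({ζ} : Set ℂ))
      = (n * p ^ k).totient := by
    rw [← hranktop]
    exact Module.finrank_mul_finrank ℚ F (IntermediateField.adjoin F ({ζ} : Set ℂ))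
  have htot : (n * p ^ k).totient = (n * p).totient * d := by
    rw [Nat.totient_mul hcopk, Nat.totient_mul hcop,
      Nat.totient_prime_pow hp (by omega : 0 < k), Nat.totient_prime hp]
    ring
  have hFpos : 0 < (n * p).totient := Nat.totient_pos.mpr (Nat.mul_pos hn hp.pos)
  have hdim : Module.finrank F ↥(IntermediateField.adjoin F ({ζ} : Set ℂ)) = d := by
    apply Nat.eq_of_mul_eq_mul_left hFpos
    rw [← hrankF, htower, htot, hrankF]
  have hmindeg : (minpoly F ζ).natDegree = d := by
    rw [← IntermediateField.adjoin.finrank hintF]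
    exact hdim
  -- polynomial / linear independence argument
  set q : Polynomial F := ∑ i : Fin d, Polynomial.C (⟨c i, hc i i.2⟩ : F) * Polynomial.X ^ (i : ℕ)
    with hqdef
  have haeval : Polynomial.aeval ζ q = 0 := by
    rw [hqdef, map_sum, ← hsum, ← Fin.sum_univ_eq_sum_range (fun r => c r * ζ ^ r) d]
    refine Finset.sum_congr rfl fun i _ => ?_
    simp [IntermediateField.algebraMap_apply]
  have hq0 : q = 0 := by
    by_contra hqne
    have hle := minpoly.degree_le_of_ne_zero F ζ hqne haeval
    have hlt : q.degree < (d : ℕ) := Polynomial.degree_sum_fin_lt _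
    have hdeg2 : (minpoly F ζ).degree = (d : ℕ) := by
      rw [Polynomial.degree_eq_natDegree (minpoly.ne_zero hintF), hmindeg]
    rw [hdeg2] at hle
    exact absurd (lt_of_le_of_lt hle hlt) (lt_irrefl _)
  intro r hr
  have hco : q.coeff r = (⟨c r, hc r hr⟩ : F) := by
    rw [hqdef, Polynomial.finset_sum_coeff]
    simp only [Polynomial.coeff_C_mul, Polynomial.coeff_X_pow, mul_ite, mul_one, mul_zero]
    rw [Finset.sum_eq_single (⟨r, hr⟩ : Fin d)]
    · simp
    · intro b _ hb
      simp only [ite_eq_right_iff]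
      intro hbr
      exact absurd (Fin.ext hbr.symm) hb
    · intro h; exact absurd (Finset.mem_univ _) h
  rw [hq0, Polynomial.coeff_zero] at hco
  simpa using congrArg Subtype.val hco.symm



/-- if `a_0, …, a_{p^k-1} ∈ ℚ(ζ_n)` and `∑ a_i ζ_{p^k}^i ∈ ℚ(ζ_n, ζ_p)`,
then `∑_{i<p^k} a_i ζ_{p^k}^i = ∑_{j<p} a_{p^{k-1} j} ζ_p^j`. -/
theorem sum_in_K_zeta_p (p : ℕ) [Fact p.Prime] (k : ℕ) (hk : 1 ≤ k)
    (n : ℕ) (hn : 0 < n) (hnp : Nat.gcd n p = 1)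
    (a : ℕ → ℂ)
    (ha : ∀ i, i < p ^ k →
      a i ∈ IntermediateField.adjoin ℚ
        ({Complex.exp (2 * Real.pi * Complex.I / n)} : Set ℂ))
    (hmem : (∑ i ∈ Finset.range (p ^ k),
        a i * Complex.exp (2 * Real.pi * Complex.I / (p ^ k : ℕ)) ^ i)
      ∈ IntermediateField.adjoin ℚ
        ({Complex.exp (2 * Real.pi * Complex.I / n),
          Complex.exp (2 * Real.pi * Complex.I / p)} : Set ℂ)) :
    ∑ i ∈ Finset.range (p ^ k),
        a i * Complex.exp (2 * Real.pi * Complex.I / (p ^ k : ℕ)) ^ i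
      = ∑ j ∈ Finset.range p,
          a (p ^ (k - 1) * j) * Complex.exp (2 * Real.pi * Complex.I / p) ^ j := by
  have hp : p.Prime := Fact.out
  set ζn : ℂ := Complex.exp (2 * Real.pi * Complex.I / n) with hζn
  set ζp : ℂ := Complex.exp (2 * Real.pi * Complex.I / p) with hζp
  set ζ : ℂ := Complex.exp (2 * Real.pi * Complex.I / ((p ^ k : ℕ) : ℂ)) with hζ
  set d : ℕ := p ^ (k - 1) with hddef
  have hd : 0 < d := pow_pos hp.pos _
  have hpd : p * d = p ^ k := by
    rw [hddef, ← pow_succ']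
    congr 1
    omega
  have hdp : d * p = p ^ k := by rw [mul_comm]; exact hpd
  have hζpd : ζ ^ d = ζp := by
    rw [hζ, hζp, ← hpd]
    exact aux_exp_pow p d hp.pos hd
  set F : IntermediateField ℚ ℂ := IntermediateField.adjoin ℚ ({ζn, ζp} : Set ℂ) with hF
  have hζpF : ζp ∈ F := IntermediateField.subset_adjoin _ _ (by right; rfl)
  set S : ℂ := ∑ i ∈ Finset.range (p ^ k), a i * ζ ^ i with hS
  set g : ℕ → ℂ := fun r => ∑ j ∈ Finset.range p, a (d * j + r) * ζp ^ j with hg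
  -- reindexing
  have hreindex : S = ∑ r ∈ Finset.range d, g r * ζ ^ r := by
    rw [hS, ← hdp]
    rw [show ∑ i ∈ Finset.range (d * p), a i * ζ ^ i
        = ∑ x ∈ Finset.range p ×ˢ Finset.range d, a (d * x.1 + x.2) * ζ ^ (d * x.1 + x.2) from ?_]
    · rw [Finset.sum_product]
      rw [Finset.sum_comm]
      refine Finset.sum_congr rfl fun r hr => ?_
      rw [hg, Finset.sum_mul]
      refine Finset.sum_congr rfl fun j hj => ?_
      rw [pow_add, pow_mul, hζpd]
      ring
    · refine Finset.sum_nbij' (fun i => (i / d, i % d)) (fun x => d * x.1 + x.2) ?_ ?_ ?_ ?_ ?_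
      · intro i hi
        rw [Finset.mem_range] at hi
        simp only [Finset.mem_product, Finset.mem_range]
        refine ⟨(Nat.div_lt_iff_lt_mul hd).mpr ?_, Nat.mod_lt _ hd⟩
        rwa [mul_comm p d]
      · intro x hx
        simp only [Finset.mem_product, Finset.mem_range] at hx
        rw [Finset.mem_range]
        calc d * x.1 + x.2 < d * x.1 + d := by omega
          _ = d * (x.1 + 1) := by ring
          _ ≤ d * p := Nat.mul_le_mul_left _ hx.1
      · intro i _
        simp only
        exact Nat.div_add_mod i d
      · intro x hx
        simp only [Finset.mem_product, Finset.mem_range] at hx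
        have h1 : (d * x.1 + x.2) / d = x.1 := by
          rw [Nat.mul_add_div hd, Nat.div_eq_of_lt hx.2, add_zero]
        have h2 : (d * x.1 + x.2) % d = x.2 := by
          rw [Nat.mul_add_mod, Nat.mod_eq_of_lt hx.2]
        simp [h1, h2]
      · intro i _
        simp only
        rw [Nat.div_add_mod i d]
  -- membership of g r in F
  have hζnF : ζn ∈ F := IntermediateField.subset_adjoin _ _ (by left; rfl)
  have haF : ∀ i, i < p ^ k → a i ∈ F := by
    intro i hi
    refine IntermediateField.adjoin.mono ℚ _ _ ?_ (ha i hi)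
    intro x hx
    rw [hx]
    left; rfl
  have hgF : ∀ r, r < d → g r ∈ F := by
    intro r hr
    rw [hg]
    refine sum_mem fun j hj => ?_
    rw [Finset.mem_range] at hj
    have hlt : d * j + r < p ^ k := by
      rw [← hdp]
      calc d * j + r < d * j + d := by omega
        _ = d * (j + 1) := by ring
        _ ≤ d * p := Nat.mul_le_mul_left _ hj
    exact mul_mem (haF _ hlt) (pow_mem hζpF j)
  -- the coefficient function
  set c : ℕ → ℂ := fun r => if r = 0 then g 0 - S else g r with hcdef
  have hcF : ∀ r, r < d → c r ∈ F := by
    intro r hr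
    rw [hcdef]
    by_cases h0 : r = 0
    · simp only [h0, if_true]
      exact sub_mem (hgF 0 hd) hmem
    · simp only [h0, if_false]
      exact hgF r hr
  have hcsum : ∑ r ∈ Finset.range d, c r * ζ ^ r = 0 := by
    have hsplit : ∀ r ∈ Finset.range d,
        c r * ζ ^ r = g r * ζ ^ r - (if r = 0 then S else 0) := by
      intro r _
      rw [hcdef]
      by_cases h0 : r = 0
      · simp [h0]
      · simp [h0]
    rw [Finset.sum_congr rfl hsplit, Finset.sum_sub_distrib, ← hreindex,
      Finset.sum_ite_eq' (Finset.range d) 0 (fun _ => S)]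
    simp [Finset.mem_range.mpr hd]
  have hkey := aux_indep p k hk n hn hnp ζn ζp ζ hζn hζp hζ c hcF hcsum
  have h0 := hkey 0 hd
  rw [hcdef] at h0
  simp only [if_true, reduceIte] at h0
  have hS0 : S = g 0 := by
    have := sub_eq_zero.mp h0
    exact this.symm
  rw [hS0]
  simp only [hg]
  refine Finset.sum_congr rfl fun j _ => ?_
  rw [add_zero]
end

section
/- (Biro) Let p be a prime, and let F be a field of characteristic p (so F contains a copy of ZMod p). Suppose a : ZMod p → F satisfies a(0) = 0, a(1) = 1, a(i) ≠ 0 for all i ≠ 0, and ∑_{i ∈ (ZMod p), i ≠ 0} a(i+j)/a(i) = -1 for every j ≠ 0. Then there exists an integer A with 1 ≤ A ≤ p - 2 such that a(i) = i^A for every i ∈ ZMod p, where i ∈ ZMod p is identified with its image in F under the canonical ring map ZMod p → F. -/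
open Finset Polynomial


lemma coeff_mul_of_natDegree_le' {F : Type*} [CommRing F] {f g : F[X]} {df dg : ℕ}
    (hf : f.natDegree ≤ df) (hg : g.natDegree ≤ dg) :
    (f * g).coeff (df + dg) = f.coeff df * g.coeff dg := by
  rw [coeff_mul]
  apply Finset.sum_eq_single (df, dg)
  · rintro ⟨x, y⟩ hxy hne
    rw [Finset.HasAntidiagonal.mem_antidiagonal] at hxy
    rcases lt_or_ge df x with h | h
    · rw [coeff_eq_zero_of_natDegree_lt (lt_of_le_of_lt hf h), zero_mul]
    · have hx : x ≠ df ∨ y ≠ dg := by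
        by_contra hc
        push_neg at hc
        exact hne (by simp [hc.1, hc.2])
      have : dg < y := by omega
      rw [coeff_eq_zero_of_natDegree_lt (lt_of_le_of_lt hg this), mul_zero]
  · intro h
    simp [Finset.HasAntidiagonal.mem_antidiagonal] at h

lemma sum_pow_zmod (p : ℕ) [Fact p.Prime] (n : ℕ) (hn : n ≠ 0) :
    ∑ x : ZMod p, x ^ n = if (p - 1) ∣ n then -1 else 0 := by
  classical
  haveI : NeZero p := ⟨(Fact.out : p.Prime).ne_zero⟩
  have hcard : Fintype.card (ZMod p) = p := ZMod.card p
  let φ : (ZMod p)ˣ ↪ ZMod p := ⟨fun x ↦ x, fun _ _ h => Units.ext h⟩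
  have himg : univ.map φ = univ \ {0} := by
    ext x
    simpa only [mem_map, mem_univ, Function.Embedding.coeFn_mk, true_and, mem_sdiff,
      mem_singleton, φ] using (show (∃ a : (ZMod p)ˣ, φ a = x) ↔ ¬x = 0 from isUnit_iff_ne_zero)
  calc
    ∑ x : ZMod p, x ^ n = ∑ x ∈ univ \ {(0 : ZMod p)}, x ^ n := by
      rw [← sum_sdiff ({0} : Finset (ZMod p)).subset_univ, sum_singleton, zero_pow hn, add_zero]
    _ = ∑ x : (ZMod p)ˣ, ((x : ZMod p) ^ n) := by
      rw [← himg, Finset.sum_map]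
      rfl
    _ = if (p - 1) ∣ n then -1 else 0 := by
      rw [FiniteField.sum_pow_units (ZMod p) n, hcard]

/-- Biro: if `F` is a field of characteristic `p`, `a : ZMod p → F`
satisfies `a 0 = 0`, `a 1 = 1`, `a i ≠ 0` for `i ≠ 0`, and
`∑_{i ≠ 0} a (i + j) / a i = -1` for every `j ≠ 0`, then `a i = i ^ A` for some
`1 ≤ A ≤ p - 2`, where `i` is viewed in `F` via the canonical map `ZMod p → F`. -/
theorem biro_char_p (p : ℕ) [Fact p.Prime] (F : Type*) [Field F] [CharP F p]
    (a : ZMod p → F) (h0 : a 0 = 0) (h1 : a 1 = 1)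
    (hne : ∀ i : ZMod p, i ≠ 0 → a i ≠ 0)
    (hsum : ∀ j : ZMod p, j ≠ 0 →
      ∑ i ∈ univ.filter (fun i : ZMod p => i ≠ 0), a (i + j) / a i = -1) :
    ∃ A : ℕ, 1 ≤ A ∧ A ≤ p - 2 ∧
      ∀ i : ZMod p, a i = (ZMod.castHom (dvd_refl p) F i) ^ A := by
  classical
  have hp : p.Prime := Fact.out
  haveI : NeZero p := ⟨hp.ne_zero⟩
  have hp2 : 2 ≤ p := hp.two_le
  set ι : ZMod p →+* F := ZMod.castHom (dvd_refl p) F with hιdef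
  have hinj : Function.Injective ι := ZMod.castHom_injective F
  have hcard : Fintype.card (ZMod p) = p := ZMod.card p
  have hpF : (p : F) = 0 := CharP.cast_eq_zero F p
  set b : ZMod p → F := fun i => (a i)⁻¹ with hbdef
  have hb0 : b 0 = 0 := by simp [hbdef, h0]
  have hb1 : b 1 = 1 := by simp [hbdef, h1]
  -- Step 1: full convolution identity
  have hconv : ∀ j : ZMod p, ∑ i : ZMod p, a (i + j) * b i = -1 := by
    intro j
    by_cases hj : j = 0
    · subst hj
      have hterm : ∀ i : ZMod p, a (i + 0) * b i = 1 - (if i = 0 then 1 else 0) := by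
        intro i
        by_cases hi : i = 0
        · simp [hi, h0, hb0]
        · simp [hi, hbdef, mul_inv_cancel₀ (hne i hi)]
      rw [Finset.sum_congr rfl fun i _ => hterm i, Finset.sum_sub_distrib]
      simp only [Finset.sum_const, Finset.card_univ, hcard, nsmul_eq_mul, mul_one]
      rw [Finset.sum_ite_eq' univ (0 : ZMod p) (fun _ => (1 : F))]
      simp [hpF]
    · have hfull : ∑ i ∈ univ.filter (fun i : ZMod p => i ≠ 0), a (i + j) * b i
          = ∑ i : ZMod p, a (i + j) * b i := by
        apply Finset.sum_filter_of_ne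
        intro i _ hne0
        intro hi0
        apply hne0
        rw [hi0, hb0, mul_zero]
      rw [← hfull, ← hsum j hj]
      apply Finset.sum_congr rfl
      intro i hi
      rw [div_eq_mul_inv]
  -- Step 2: interpolating polynomials
  set P : F[X] := Lagrange.interpolate Finset.univ (⇑ι) a with hPdef
  set Q : F[X] := Lagrange.interpolate Finset.univ (⇑ι) b with hQdef
  have hinjon : Set.InjOn (⇑ι) (Finset.univ : Finset (ZMod p)) := hinj.injOn
  have hPa : ∀ i : ZMod p, P.eval (ι i) = a i := fun i =>
    Lagrange.eval_interpolate_at_node a hinjon (Finset.mem_univ i)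
  have hQb : ∀ i : ZMod p, Q.eval (ι i) = b i := fun i =>
    Lagrange.eval_interpolate_at_node b hinjon (Finset.mem_univ i)
  have hPdeg : P.degree < (p : ℕ) := by
    simpa only [Finset.card_univ, hcard] using Lagrange.degree_interpolate_lt a hinjon
  have hQdeg : Q.degree < (p : ℕ) := by
    simpa only [Finset.card_univ, hcard] using Lagrange.degree_interpolate_lt b hinjon
  have hP0 : P ≠ 0 := by
    intro h
    have := hPa 1
    rw [h] at this
    simp [h1] at this
  have hQ0 : Q ≠ 0 := by
    intro h
    have := hQb 1
    rw [h] at this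
    simp [hb1] at this
  have hPnat : P.natDegree ≤ p - 1 := by
    have := (Polynomial.natDegree_lt_iff_degree_lt hP0).mpr hPdeg
    omega
  have hQnat : Q.natDegree ≤ p - 1 := by
    have := (Polynomial.natDegree_lt_iff_degree_lt hQ0).mpr hQdeg
    omega
  -- Step 3: power sums evaluated over the prime field inside F
  have hS : ∀ n : ℕ, n < 2 * p - 1 →
      ∑ i : ZMod p, (ι i) ^ n = (if n = p - 1 then (-1 : F) else if n = 2 * p - 2 then -1 else 0) := by
    intro n hn
    by_cases hn0 : n = 0
    · subst hn0
      simp only [pow_zero, Finset.sum_const, Finset.card_univ, hcard, nsmul_eq_mul, mul_one]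
      rw [if_neg (by omega), if_neg (by omega)]
      exact hpF
    · have : ∑ i : ZMod p, (ι i) ^ n = ι (∑ i : ZMod p, i ^ n) := by
        rw [map_sum]
        simp [map_pow]
      rw [this, sum_pow_zmod p n hn0]
      by_cases hd : (p - 1) ∣ n
      · rw [if_pos hd]
        obtain ⟨k, hk⟩ := hd
        have hk1 : 1 ≤ k := by
          rcases Nat.eq_zero_or_pos k with h | h
          · subst h; simp at hk; omega
          · exact h
        have hk2 : k ≤ 2 := by
          by_contra hk3
          push_neg at hk3
          have h3 : (p - 1) * 3 ≤ (p - 1) * k := Nat.mul_le_mul_left _ (by omega)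
          rw [← hk] at h3
          omega
        interval_cases k
        · rw [if_pos (by omega)]
          simp
        · rw [if_neg (by omega), if_pos (by omega)]
          simp
      · rw [if_neg hd, if_neg (by rintro rfl; exact hd ⟨1, by omega⟩),
          if_neg (by rintro rfl; exact hd ⟨2, by omega⟩)]
        simp
  -- Step 4: sum of evaluations of a polynomial of bounded degree
  have hsumeval : ∀ R : F[X], R.natDegree < 2 * p - 1 →
      ∑ i : ZMod p, R.eval (ι i) = -(R.coeff (p - 1)) - R.coeff (2 * p - 2) := by
    intro R hR
    have heval : ∀ x : F, R.eval x = ∑ n ∈ Finset.range (2 * p - 1), R.coeff n * x ^ n := by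
      intro x
      exact Polynomial.eval_eq_sum_range' hR x
    calc
      ∑ i : ZMod p, R.eval (ι i)
          = ∑ i : ZMod p, ∑ n ∈ Finset.range (2 * p - 1), R.coeff n * (ι i) ^ n := by
            exact Finset.sum_congr rfl fun i _ => heval (ι i)
      _ = ∑ n ∈ Finset.range (2 * p - 1), R.coeff n * ∑ i : ZMod p, (ι i) ^ n := by
            rw [Finset.sum_comm]
            exact Finset.sum_congr rfl fun n _ => by rw [Finset.mul_sum]
      _ = ∑ n ∈ Finset.range (2 * p - 1),
            ((if n = p - 1 then -R.coeff n else 0) + (if n = 2 * p - 2 then -R.coeff n else 0)) := by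
            apply Finset.sum_congr rfl
            intro n hn
            rw [Finset.mem_range] at hn
            rw [hS n hn]
            by_cases h1' : n = p - 1
            · rw [if_pos h1', if_pos h1', if_neg (by omega)]
              ring
            · rw [if_neg h1', if_neg h1']
              by_cases h2' : n = 2 * p - 2
              · rw [if_pos h2', if_pos h2']
                ring
              · rw [if_neg h2', if_neg h2']
                ring
      _ = -(R.coeff (p - 1)) - R.coeff (2 * p - 2) := by
            rw [Finset.sum_add_distrib]
            rw [Finset.sum_ite_eq' (Finset.range (2 * p - 1)) (p - 1) (fun n => -R.coeff n)]
            rw [Finset.sum_ite_eq' (Finset.range (2 * p - 1)) (2 * p - 2) (fun n => -R.coeff n)]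
            rw [if_pos (Finset.mem_range.mpr (by omega)), if_pos (Finset.mem_range.mpr (by omega))]
            ring
  -- Step 5: the key coefficient identities
  have hKey : ∀ m : ℕ, 1 ≤ m → m ≤ p - 1 →
      (Q * P.hasseDeriv m).coeff (p - 1) + (Q * P.hasseDeriv m).coeff (2 * p - 2) = 0 := by
    intro m hm1 hm2
    -- the polynomial T
    set T : F[X] := ∑ i : ZMod p, Polynomial.C (b i) * Polynomial.taylor (ι i) P with hTdef
    have hTeval : ∀ j : ZMod p, T.eval (ι j) = -1 := by
      intro j
      rw [hTdef, Polynomial.eval_finset_sum]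
      have : ∀ i : ZMod p, (Polynomial.C (b i) * Polynomial.taylor (ι i) P).eval (ι j)
          = a (i + j) * b i := by
        intro i
        rw [Polynomial.eval_mul, Polynomial.eval_C, Polynomial.taylor_eval]
        rw [← map_add]
        rw [show (j + i : ZMod p) = i + j from add_comm j i, hPa (i + j)]
        ring
      rw [Finset.sum_congr rfl fun i _ => this i]
      exact hconv j
    have hTdeg : T.natDegree ≤ p - 1 := by
      apply Polynomial.natDegree_sum_le_of_forall_le
      intro i _
      refine (Polynomial.natDegree_C_mul_le _ _).trans ?_
      rw [Polynomial.natDegree_taylor]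
      exact hPnat
    have hTzero : T + Polynomial.C 1 = 0 := by
      apply Polynomial.eq_zero_of_natDegree_lt_card_of_eval_eq_zero _ hinj
      · intro i
        rw [Polynomial.eval_add, Polynomial.eval_C, hTeval i]
        ring
      · rw [hcard]
        have : (T + Polynomial.C 1).natDegree ≤ p - 1 := by
          refine (Polynomial.natDegree_add_le _ _).trans ?_
          simp [hTdeg]
        omega
    have hT : T = Polynomial.C (-1) := by
      have := hTzero
      rw [← eq_neg_iff_add_eq_zero] at this
      rw [this, map_neg]
    have hcoeffT : T.coeff m = 0 := by
      rw [hT, Polynomial.coeff_C, if_neg (by omega)]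
    -- rewrite coeff m of T
    have hcoeffT' : T.coeff m = ∑ i : ZMod p, (Q * P.hasseDeriv m).eval (ι i) := by
      rw [hTdef, Polynomial.finset_sum_coeff]
      apply Finset.sum_congr rfl
      intro i _
      rw [Polynomial.coeff_C_mul, Polynomial.taylor_coeff, Polynomial.eval_mul, hQb i]
    have hRnat : (Q * P.hasseDeriv m).natDegree < 2 * p - 1 := by
      refine lt_of_le_of_lt (Polynomial.natDegree_mul_le) ?_
      have := Polynomial.natDegree_hasseDeriv_le P m
      omega
    have := hsumeval (Q * P.hasseDeriv m) hRnat
    rw [← hcoeffT', hcoeffT] at this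
    linear_combination this
  -- Step 6: degree bound
  have hdeg : P.natDegree + Q.natDegree ≤ p - 1 := by
    by_contra hlt
    push_neg at hlt
    set dP := P.natDegree with hdP
    set dQ := Q.natDegree with hdQ
    set m : ℕ := dP + dQ - (p - 1) with hmdef
    have hm1 : 1 ≤ m := by omega
    have hmle : m ≤ p - 1 := by omega
    have hmdP : m ≤ dP := by omega
    have key := hKey m hm1 hmle
    have hsplit : p - 1 = dQ + (dP - m) := by omega
    have hcoeff1 : (Q * P.hasseDeriv m).coeff (p - 1)
        = Q.coeff dQ * ((dP.choose m : F) * P.coeff dP) := by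
      rw [hsplit, coeff_mul_of_natDegree_le' le_rfl (Polynomial.natDegree_hasseDeriv_le P m)]
      rw [Polynomial.hasseDeriv_coeff]
      rw [show dP - m + m = dP by omega]
    have hcoeff2 : (Q * P.hasseDeriv m).coeff (2 * p - 2) = 0 := by
      apply Polynomial.coeff_eq_zero_of_natDegree_lt
      refine lt_of_le_of_lt (Polynomial.natDegree_mul_le) ?_
      have := Polynomial.natDegree_hasseDeriv_le P m
      omega
    rw [hcoeff1, hcoeff2, add_zero] at key
    have hQlead : Q.coeff dQ ≠ 0 := Polynomial.leadingCoeff_ne_zero.mpr hQ0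
    have hPlead : P.coeff dP ≠ 0 := Polynomial.leadingCoeff_ne_zero.mpr hP0
    have hchoose : ((dP.choose m : ℕ) : F) ≠ 0 := by
      rw [Ne, CharP.cast_eq_zero_iff F p]
      intro hdvd
      have hdvdfact : p ∣ dP.factorial := by
        refine dvd_trans hdvd ?_
        exact ⟨m.factorial * (dP - m).factorial, by
          rw [← Nat.choose_mul_factorial_mul_factorial hmdP, mul_assoc]⟩
      have := (Nat.Prime.dvd_factorial hp).mp hdvdfact
      omega
    exact (mul_ne_zero hQlead (mul_ne_zero hchoose hPlead)) key
  -- Step 7: P * Q = X ^ (p-1)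
  have hPQ : P * Q = Polynomial.X ^ (p - 1) := by
    have hD : P * Q - Polynomial.X ^ (p - 1) = 0 := by
      apply Polynomial.eq_zero_of_natDegree_lt_card_of_eval_eq_zero _ hinj
      · intro i
        rw [Polynomial.eval_sub, Polynomial.eval_mul, hPa i, hQb i, Polynomial.eval_pow,
          Polynomial.eval_X]
        by_cases hi : i = 0
        · subst hi
          rw [map_zero, zero_pow (by omega : p - 1 ≠ 0), h0, hb0]
          ring
        · have : (ι i) ^ (p - 1) = 1 := by
            rw [← map_pow, ZMod.pow_card_sub_one_eq_one hi, map_one]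
          rw [this, hbdef]
          simp only
          rw [mul_inv_cancel₀ (hne i hi)]
          ring
      · rw [hcard]
        have h1' : (P * Q).natDegree ≤ p - 1 := le_trans Polynomial.natDegree_mul_le hdeg
        have h2' : (Polynomial.X ^ (p - 1) : F[X]).natDegree = p - 1 := by
          simp
        have := Polynomial.natDegree_sub_le (P * Q) (Polynomial.X ^ (p - 1) : F[X])
        omega
    exact sub_eq_zero.mp hD
  -- Step 8: endgame, P is a monomial
  have hdvd : P ∣ Polynomial.X ^ (p - 1) := ⟨Q, hPQ.symm⟩
  obtain ⟨A, hAle, hassoc⟩ := (dvd_prime_pow Polynomial.prime_X (p - 1)).mp hdvd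
  obtain ⟨u, hu⟩ := hassoc
  obtain ⟨c, hcunit, hCc⟩ := Polynomial.isUnit_iff.mp u.isUnit
  -- P * C c = X ^ A
  have hPc : P * Polynomial.C c = Polynomial.X ^ A := by
    rw [hCc, hu]
  have heval : ∀ i : ZMod p, a i * c = (ι i) ^ A := by
    intro i
    have := congrArg (Polynomial.eval (ι i)) hPc
    rwa [Polynomial.eval_mul, Polynomial.eval_C, hPa i, Polynomial.eval_pow,
      Polynomial.eval_X] at this
  have hc1 : c = 1 := by
    have := heval 1
    rw [h1, one_mul, map_one, one_pow] at this
    exact this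
  have hval : ∀ i : ZMod p, a i = (ι i) ^ A := by
    intro i
    have := heval i
    rwa [hc1, mul_one] at this
  -- bounds
  have hA1 : 1 ≤ A := by
    by_contra hA0
    push_neg at hA0
    interval_cases A
    have := hval 0
    rw [h0, pow_zero] at this
    exact one_ne_zero this.symm
  have hdP : P.natDegree = A := by
    have : P = Polynomial.X ^ A := by
      rw [hc1, map_one, mul_one] at hPc
      exact hPc
    rw [this]
    simp
  have hdQ1 : 1 ≤ Q.natDegree := by
    by_contra hq
    push_neg at hq
    have hq0 : Q.natDegree = 0 := by omega
    obtain ⟨d, hd⟩ := Polynomial.natDegree_eq_zero.mp hq0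
    have e0 : d = 0 := by
      have := hQb 0
      rw [← hd, map_zero] at this
      simpa [hb0] using this
    have e1 : d = 1 := by
      have := hQb 1
      rw [← hd, map_one] at this
      simpa [hb1] using this
    rw [e0] at e1
    exact zero_ne_one e1
  have hA2 : A ≤ p - 2 := by
    have := hdeg
    rw [hdP] at this
    omega
  exact ⟨A, hA1, hA2, fun i => hval i⟩
end

section
/- Let p be a prime, m a positive integer, and f : ZMod p → ℂ with f(0) = 0, f(x)^m = 1 for all x ≠ 0, and ∑_{x ∈ ZMod p} f(x)·conj(f(x+h)) = -1 for every h ≠ 0. Then for every integer j with gcd(j, m) = 1 and every integer t with t ≢ 0 (mod p), |∑_{x ∈ ZMod p} f(x)^j · e^{2πi t x / p}| = √p. In particular, every ℚ-conjugate of the Gauss sum G(f, ψ) = ∑_{x} f(x)·e^{2πi x / p} has absolute value √p, so the ℚ-norm of G(f, ψ) is, up to sign, a power of p. -/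
open Finset Complex Polynomial

private lemma key_transfer {m : ℕ} (hm : 0 < m) {ζ ζ' : ℂ}
    (hζ : IsPrimitiveRoot ζ m) (hζ' : IsPrimitiveRoot ζ' m)
    {ι : Type*} (s : Finset ι) (d : ι → ℕ) (q : ℚ)
    (h : ∑ i ∈ s, ζ ^ d i = (q : ℂ)) :
    ∑ i ∈ s, ζ' ^ d i = (q : ℂ) := by
  set P : ℚ[X] := (∑ i ∈ s, X ^ d i) - C q with hP
  have hPζ : aeval ζ P = 0 := by
    simp [hP, map_sub, map_sum, h]
  have hdvd : minpoly ℚ ζ ∣ P := minpoly.dvd ℚ ζ hPζ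
  rw [← Polynomial.cyclotomic_eq_minpoly_rat hζ hm] at hdvd
  have hζ'root : aeval ζ' (cyclotomic m ℚ) = 0 := by
    have h2 := hζ'.isRoot_cyclotomic hm
    rw [Polynomial.IsRoot] at h2
    rw [Polynomial.aeval_def, ← Polynomial.eval_map, Polynomial.map_cyclotomic]
    exact h2
  have hPζ' : aeval ζ' P = 0 := by
    obtain ⟨Q, hQ⟩ := hdvd
    rw [hQ, map_mul, hζ'root, zero_mul]
  have h3 : (∑ i ∈ s, ζ' ^ d i) - (q : ℂ) = 0 := by
    simpa [hP, map_sub, map_sum] using hPζ'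
  exact sub_eq_zero.mp h3

private lemma pow_mul_conj_pow {m : ℕ} (hm : 0 < m) {ω : ℂ} (hω : ω ^ m = 1)
    (habs : ‖ω‖ = 1) (a b : ℕ) :
    ω ^ a * (starRingEnd ℂ) (ω ^ b) = ω ^ (a + (m - 1) * b) := by
  have hinv : ω ^ (m - 1) = ω⁻¹ := by
    have h1 : ω ^ (m - 1) * ω = 1 := by
      rw [← pow_succ, Nat.sub_add_cancel hm, hω]
    exact eq_inv_of_mul_eq_one_left h1
  have hb : (starRingEnd ℂ) (ω ^ b) = (ω ^ (m-1)) ^ b := by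
    rw [hinv, inv_pow, Complex.inv_eq_conj (by rw [norm_pow, habs, one_pow])]
  rw [hb, pow_add, pow_mul]

private lemma pow_mod_eq {ε : ℂ} {p : ℕ} (h : ε ^ p = 1) (n : ℕ) :
    ε ^ (n % p) = ε ^ n := by
  conv_rhs => rw [← Nat.mod_add_div n p]
  rw [pow_add, pow_mul, h, one_pow, mul_one]

private lemma sum_pow_val {p : ℕ} [Fact p.Prime] {ε : ℂ} (hp : ε ^ p = 1) (hε : ε ≠ 1) :
    ∑ x : ZMod p, ε ^ x.val = 0 := by
  have hcard : (0:ℕ) < p := (Fact.out : p.Prime).pos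
  have h1 : ∑ x : ZMod p, ε ^ x.val = ∑ i ∈ range p, ε ^ i := by
    refine Finset.sum_nbij' (fun x => x.val) (fun i => (i : ZMod p)) ?_ ?_ ?_ ?_ ?_
    · intro x _; exact mem_range.mpr (ZMod.val_lt x)
    · intro i _; exact mem_univ _
    · intro x _; simp [ZMod.natCast_val, ZMod.cast_id]
    · intro i hi; exact ZMod.val_cast_of_lt (mem_range.mp hi)
    · intro x _; rfl
  rw [h1, geom_sum_eq hε, hp, sub_self, zero_div]


private lemma abs_eq_one_of_pow {z : ℂ} {n : ℕ} (h : z ^ n = 1) (hn : n ≠ 0) :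
    ‖z‖ = 1 := by
  have h1 : ‖z‖ ^ n = 1 := by rw [← norm_pow, h, norm_one]
  rcases lt_trichotomy (‖z‖) 1 with h2 | h2 | h2
  · have := pow_lt_one₀ (norm_nonneg z) h2 hn
    rw [h1] at this; linarith
  · exact h2
  · have := one_lt_pow₀ h2 hn
    rw [h1] at this; linarith


/-- all `ℚ`-conjugates of the Gauss sum of a function satisfying
Cohn's condition (with nonzero values `m`-th roots of unity) have absolute value
`√p`: for `gcd(j, m) = 1` and `t ≢ 0 (mod p)`,
`|∑ x, (f x)^j e^{2πi t x / p}| = √p`. -/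
theorem gauss_sum_conjugates_abs (p : ℕ) [Fact p.Prime] (m : ℕ) (hm : 0 < m)
    (f : ZMod p → ℂ) (hf0 : f 0 = 0)
    (hfm : ∀ x : ZMod p, x ≠ 0 → f x ^ m = 1)
    (hcohn : ∀ h : ZMod p, h ≠ 0 →
      ∑ x : ZMod p, f x * (starRingEnd ℂ) (f (x + h)) = -1) :
    ∀ j : ℤ, Int.gcd j m = 1 → ∀ t : ℤ, ¬ (p : ℤ) ∣ t →
      ‖∑ x : ZMod p,
          (f x) ^ j * Complex.exp (2 * Real.pi * Complex.I * t * x.val / p)‖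
        = Real.sqrt p := by
  intro j hj t ht
  have hppos : 0 < p := (Fact.out : p.Prime).pos
  have hpne : (p : ℂ) ≠ 0 := by exact_mod_cast hppos.ne'
  -- dispatch m = 1
  rcases Nat.lt_or_ge m 2 with hm2 | hm2
  · exfalso
    have hm1 : m = 1 := by omega
    subst hm1
    have h1 : (1 : ZMod p) ≠ 0 := one_ne_zero
    have hc := hcohn 1 h1
    have hre : 0 ≤ (∑ x : ZMod p, f x * (starRingEnd ℂ) (f (x + 1))).re := by
      rw [Complex.re_sum]
      apply Finset.sum_nonneg
      intro x _
      by_cases hx : x = 0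
      · simp [hx, hf0]
      · by_cases hx1 : x + 1 = 0
        · simp [hx1, hf0]
        · have e1 := hfm x hx
          have e2 := hfm (x + 1) hx1
          rw [pow_one] at e1 e2
          simp [e1, e2]
    rw [hc] at hre
    norm_num at hre
  -- m ≥ 2
  have : NeZero m := ⟨by omega⟩
  have hj0 : j ≠ 0 := by
    intro h
    subst h
    simp [Int.gcd] at hj
    omega
  set ζ : ℂ := Complex.exp (2 * Real.pi * Complex.I / m) with hζdef
  have hζ : IsPrimitiveRoot ζ m := Complex.isPrimitiveRoot_exp m (by omega)
  have hζne : ζ ≠ 0 := hζ.ne_zero (by omega)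
  have habsζ : ‖ζ‖ = 1 := abs_eq_one_of_pow hζ.pow_eq_one (by omega)
  set j₀ : ℕ := (j % (m : ℤ)).toNat with hj₀def
  have hj₀ : (j₀ : ℤ) = j % (m : ℤ) :=
    Int.toNat_of_nonneg (Int.emod_nonneg j (by exact_mod_cast (by omega : m ≠ 0)))
  have hcop : Nat.Coprime j₀ m := by
    have hiscop : IsCoprime (j : ℤ) (m : ℤ) := Int.isCoprime_iff_gcd_eq_one.mpr hj
    have h2 : IsCoprime ((j₀ : ℤ)) ((m : ℕ) : ℤ) := by
      rw [hj₀, show j % (m : ℤ) = j + (m : ℤ) * (-(j / m)) by rw [Int.emod_def]; ring]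
      exact hiscop.add_mul_left_left (-(j / m))
    have h3 : Int.gcd (j₀ : ℤ) ((m : ℕ) : ℤ) = 1 := Int.isCoprime_iff_gcd_eq_one.mp h2
    rwa [Int.gcd_natCast_natCast] at h3
  have hzpowj : ζ ^ (j : ℤ) = ζ ^ j₀ := by
    conv_lhs => rw [← Int.emod_add_mul_ediv j (m : ℤ)]
    rw [zpow_add₀ hζne, zpow_mul, hζ.zpow_eq_one, one_zpow, mul_one, ← hj₀, zpow_natCast]
  -- discrete log
  have hdex : ∀ x : ZMod p, ∃ k : ℕ, x ≠ 0 → ζ ^ k = f x := by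
    intro x
    by_cases hx : x = 0
    · exact ⟨0, fun h => absurd hx h⟩
    · obtain ⟨i, _, hi⟩ := hζ.eq_pow_of_pow_eq_one (hfm x hx)
      exact ⟨i, fun _ => hi⟩
  choose d hd using hdex
  set ζ' : ℂ := ζ ^ j₀ with hζ'def
  have hζ' : IsPrimitiveRoot ζ' m := hζ.pow_of_coprime j₀ hcop
  have habsζ' : ‖ζ'‖ = 1 := abs_eq_one_of_pow hζ'.pow_eq_one (by omega)
  set g : ZMod p → ℂ := fun x => if x = 0 then 0 else ζ' ^ d x with hgdef
  have hg0 : g 0 = 0 := by simp [hgdef]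
  have hgx : ∀ x : ZMod p, x ≠ 0 → g x = ζ' ^ d x := by
    intro x hx; simp [hgdef, hx]
  have hgf : ∀ x : ZMod p, f x ^ j = g x := by
    intro x
    by_cases hx : x = 0
    · rw [hx, hf0, hg0, zero_zpow j hj0]
    · rw [hgx x hx, ← hd x hx]
      rw [← zpow_natCast ζ (d x), ← zpow_mul, mul_comm, zpow_mul, hzpowj, zpow_natCast]
  -- Cohn condition for g
  have hgcohn : ∀ h : ZMod p, h ≠ 0 →
      ∑ x : ZMod p, g x * (starRingEnd ℂ) (g (x + h)) = -1 := by
    intro h hh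
    set s : Finset (ZMod p) := Finset.univ.filter (fun x => x ≠ 0 ∧ x + h ≠ 0) with hsdef
    set e : ZMod p → ℕ := fun x => d x + (m - 1) * d (x + h) with hedef
    have hsub : ∀ (F : ZMod p → ℂ), F 0 = 0 →
        ∑ x ∈ s, F x * (starRingEnd ℂ) (F (x + h)) =
          ∑ x : ZMod p, F x * (starRingEnd ℂ) (F (x + h)) := by
      intro F hF0
      apply Finset.sum_subset (Finset.filter_subset _ _)
      intro x _ hxs
      simp only [hsdef, Finset.mem_filter, Finset.mem_univ, true_and, not_and_or,
        not_not] at hxs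
      rcases hxs with hx | hx
      · rw [hx, hF0, zero_mul]
      · rw [hx, hF0, map_zero, mul_zero]
    have hfs : ∑ x ∈ s, ζ ^ e x = ((-1 : ℚ) : ℂ) := by
      have h2 : ∀ x ∈ s, ζ ^ e x = f x * (starRingEnd ℂ) (f (x + h)) := by
        intro x hx
        simp only [hsdef, Finset.mem_filter, Finset.mem_univ, true_and] at hx
        rw [← hd x hx.1, ← hd (x + h) hx.2]
        exact (pow_mul_conj_pow hm hζ.pow_eq_one habsζ _ _).symm
      rw [Finset.sum_congr rfl h2, hsub f hf0, hcohn h hh]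
      norm_num
    have hgs : ∑ x ∈ s, ζ' ^ e x = ((-1 : ℚ) : ℂ) :=
      key_transfer hm hζ hζ' s e (-1) hfs
    have h3 : ∀ x ∈ s, g x * (starRingEnd ℂ) (g (x + h)) = ζ' ^ e x := by
      intro x hx
      simp only [hsdef, Finset.mem_filter, Finset.mem_univ, true_and] at hx
      rw [hgx x hx.1, hgx (x + h) hx.2]
      exact pow_mul_conj_pow hm hζ'.pow_eq_one habsζ' _ _
    rw [← hsub g hg0, Finset.sum_congr rfl h3, hgs]
    norm_num
  -- the additive character
  set ε : ℂ := Complex.exp (2 * Real.pi * Complex.I * t / p) with hεdef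
  have hεp : ε ^ p = 1 := by
    rw [hεdef, ← Complex.exp_nat_mul]
    have harg : (p : ℂ) * (2 * Real.pi * Complex.I * t / p) =
        (t : ℂ) * (2 * Real.pi * Complex.I) := by
      field_simp
    rw [harg, Complex.exp_int_mul_two_pi_mul_I]
  have hε1 : ε ≠ 1 := by
    intro hcon
    rw [hεdef, Complex.exp_eq_one_iff] at hcon
    obtain ⟨n, hn⟩ := hcon
    apply ht
    have hπ : (Real.pi : ℂ) ≠ 0 := by exact_mod_cast Real.pi_ne_zero
    have hI := Complex.I_ne_zero
    field_simp at hn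
    have h2 : (2 * Real.pi * Complex.I : ℂ) * t = (2 * Real.pi * Complex.I) * (n * p) := by
      linear_combination (2 * Real.pi * Complex.I : ℂ) * hn
    have h3 : (t : ℂ) = ((n * p : ℤ) : ℂ) := by
      have := mul_left_cancel₀ (by simp [hπ, hI, two_ne_zero] : (2 * Real.pi * Complex.I : ℂ) ≠ 0) h2
      push_cast
      exact this
    have h4 : t = n * p := by exact_mod_cast h3
    exact ⟨n, by rw [h4, mul_comm]⟩
  have habsε : ‖ε‖ = 1 := abs_eq_one_of_pow hεp hppos.ne'
  have hψadd : ∀ a b : ZMod p, ε ^ (a + b).val = ε ^ a.val * ε ^ b.val := by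
    intro a b
    rw [ZMod.val_add, pow_mod_eq hεp, pow_add]
  -- rewrite the goal
  have hgoal : ∑ x : ZMod p, f x ^ j * Complex.exp (2 * Real.pi * Complex.I * t * x.val / p)
      = ∑ x : ZMod p, g x * ε ^ x.val := by
    apply Finset.sum_congr rfl
    intro x _
    rw [hgf x]
    congr 1
    rw [hεdef, ← Complex.exp_nat_mul]
    congr 1
    ring
  rw [hgoal]
  set S : ℂ := ∑ x : ZMod p, g x * ε ^ x.val with hSdef
  have hnormg : ∀ y : ZMod p, y ≠ 0 → g y * (starRingEnd ℂ) (g y) = 1 := by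
    intro y hy
    have hab : ‖g y‖ = 1 := by
      rw [hgx y hy, norm_pow, habsζ', one_pow]
    rw [Complex.mul_conj, Complex.normSq_eq_norm_sq, hab]
    norm_num
  have hnormε : ∀ k : ℕ, ε ^ k * (starRingEnd ℂ) (ε ^ k) = 1 := by
    intro k
    rw [Complex.mul_conj, Complex.normSq_eq_norm_sq, norm_pow, habsε, one_pow]
    norm_num
  have hS : S * (starRingEnd ℂ) S = (p : ℂ) := by
    rw [hSdef, map_sum, Finset.sum_mul_sum, Finset.sum_comm]
    have hrow : ∀ y : ZMod p,
        ∑ x : ZMod p, (g x * ε ^ x.val) * (starRingEnd ℂ) (g y * ε ^ y.val)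
        = ∑ h : ZMod p, (g (y + h) * (starRingEnd ℂ) (g y)) * ε ^ h.val := by
      intro y
      rw [← Equiv.sum_comp (Equiv.addLeft y)
        (fun x => (g x * ε ^ x.val) * (starRingEnd ℂ) (g y * ε ^ y.val))]
      apply Finset.sum_congr rfl
      intro h _
      simp only [Equiv.coe_addLeft]
      rw [map_mul, hψadd y h]
      have : g (y + h) * (ε ^ y.val * ε ^ h.val) * ((starRingEnd ℂ) (g y) * (starRingEnd ℂ) (ε ^ y.val)) =
          (g (y + h) * (starRingEnd ℂ) (g y)) * ε ^ h.val * (ε ^ y.val * (starRingEnd ℂ) (ε ^ y.val)) := by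
        ring
      rw [this, hnormε y.val, mul_one]
    rw [Finset.sum_congr rfl (fun y _ => hrow y), Finset.sum_comm]
    have hcol : ∀ h : ZMod p,
        ∑ y : ZMod p, (g (y + h) * (starRingEnd ℂ) (g y)) * ε ^ h.val
        = -(ε ^ h.val) + (if h = 0 then (p : ℂ) else 0) := by
      intro h
      rw [← Finset.sum_mul]
      by_cases hh : h = 0
      · subst hh
        simp only [add_zero, if_true]
        have h1 : ∑ y : ZMod p, g y * (starRingEnd ℂ) (g y) = (p : ℂ) - 1 := by
          have h2 : ∀ y : ZMod p, g y * (starRingEnd ℂ) (g y)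
              = 1 - (if y = 0 then 1 else 0) := by
            intro y
            by_cases hy : y = 0
            · simp [hy, hg0]
            · simp [hy, hnormg y hy]
          rw [Finset.sum_congr rfl (fun y _ => h2 y), Finset.sum_sub_distrib,
            Finset.sum_const, Finset.sum_ite_eq' Finset.univ (0 : ZMod p) (fun _ => (1 : ℂ))]
          simp [Finset.card_univ, ZMod.card]
        rw [h1, ZMod.val_zero, pow_zero, mul_one]
        ring
      · simp only [hh, if_false, add_zero]
        have h1 : ∑ y : ZMod p, g (y + h) * (starRingEnd ℂ) (g y) = -1 := by
          have h2 := congrArg (starRingEnd ℂ) (hgcohn h hh)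
          rw [map_sum] at h2
          simp only [map_mul, Complex.conj_conj, map_neg, map_one] at h2
          rw [← h2]
          apply Finset.sum_congr rfl
          intro y _
          ring
        rw [h1]
        ring
    rw [Finset.sum_congr rfl (fun h _ => hcol h), Finset.sum_add_distrib,
      Finset.sum_neg_distrib, sum_pow_val hεp hε1,
      Finset.sum_ite_eq' Finset.univ (0 : ZMod p) (fun _ => (p : ℂ))]
    simp
  have habs2 : Complex.normSq S = (p : ℝ) := by
    rw [Complex.mul_conj] at hS
    exact_mod_cast hS
  rw [Complex.norm_def, habs2]
end
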